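/- arXiv:1511.08929 — 6 statements merged into one kernel-verified Lean document; each statement's English description precedes it below -/
import Mathlib

section
/- Let {T_n} be a sequence in κ(T) and m a nonnegative integer such that there exists C > 0 with ‖T_n x‖ ≤ C‖x‖ for every n and every x in the closure of the range of (T−I)^m. Then X_0 is a closed linear subspace of X and X_0 ⊆ ⋂_{k≥0} closure(range((T−I)^k)). -/
open Filter Topology

/-- Membership in κ(T): operators of the form Σ_{j≥0} t_j T^j with t_j ≥ 0,
Σ t_j = 1, and the series converging in operator norm. -/
def InKappa {X : Type*} [NormedAddCommGroup X] [NormedSpace ℂ X]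
    (T S : X →L[ℂ] X) : Prop :=
  ∃ t : ℕ → ℝ, (∀ j, 0 ≤ t j) ∧ HasSum t 1 ∧ HasSum (fun j => t j • T ^ j) S

set_option maxHeartbeats 1000000 in
/-- If a sequence {T_n} in κ(T) is bounded on the closure of the range of (T−I)^m,
then X₀ = {x : ‖T_n x‖ → 0} is a closed linear subspace of X contained in
⋂_{k≥0} closure(range((T−I)^k)). -/
theorem stmt0 {X : Type*} [NormedAddCommGroup X] [NormedSpace ℂ X] [CompleteSpace X]
    (T : X →L[ℂ] X) (Tn : ℕ → X →L[ℂ] X) (hκ : ∀ n, InKappa T (Tn n))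
    (m : ℕ) (C : ℝ) (hC : 0 < C)
    (hbdd : ∀ n, ∀ x ∈ closure (Set.range ⇑((T - 1) ^ m)), ‖Tn n x‖ ≤ C * ‖x‖) :
    ∃ S : Submodule ℂ X,
      (S : Set X) = {x : X | Tendsto (fun n => ‖Tn n x‖) atTop (𝓝 0)} ∧
      IsClosed (S : Set X) ∧
      ∀ k : ℕ, (S : Set X) ⊆ closure (Set.range ⇑((T - 1) ^ k)) := by
  -- T commutes with each Tn n
  have hcommT : ∀ n, T * Tn n = Tn n * T := by
    intro n
    obtain ⟨t, ht0, ht1, hts⟩ := hκ n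
    have h1 : HasSum (fun j => T * (t j • T ^ j)) (T * Tn n) := hts.mul_left T
    have h2 : HasSum (fun j => (t j • T ^ j) * T) (Tn n * T) := hts.mul_right T
    have h2' : HasSum (fun j => T * (t j • T ^ j)) (Tn n * T) := by
      refine h2.congr_fun fun j => ?_
      rw [mul_smul_comm, smul_mul_assoc, ← pow_succ, ← pow_succ']
    exact h1.unique h2'
  -- the submodule
  let S : Submodule ℂ X :=
    { carrier := {x : X | Tendsto (fun k => Tn k x) atTop (𝓝 0)}
      add_mem' := by
        intro x y hx hy
        have := hx.add hy
        simpa [map_add] using this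
      zero_mem' := by simp
      smul_mem' := by
        intro c x hx
        have := hx.const_smul c
        simpa [map_smul] using this }
  have hmemS : ∀ x : X, x ∈ S ↔ Tendsto (fun k => Tn k x) atTop (𝓝 0) := fun _ => Iff.rfl
  -- invariance under T
  have hTmem : ∀ x ∈ S, T x ∈ S := by
    intro x hx
    rw [hmemS] at hx ⊢
    have h := (T.continuous.tendsto 0).comp hx
    rw [map_zero] at h
    refine h.congr fun k => ?_
    show T (Tn k x) = Tn k (T x)
    calc T (Tn k x) = (T * Tn k) x := rfl
    _ = (Tn k * T) x := by rw [hcommT k]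
    _ = Tn k (T x) := rfl
  have hpow_mem : ∀ x ∈ S, ∀ j : ℕ, (T ^ j) x ∈ S := by
    intro x hx j
    induction j with
    | zero => simpa using hx
    | succ j ih =>
      have := hTmem _ ih
      rw [show T ((T ^ j) x) = (T ^ (j + 1)) x by rw [pow_succ']; rfl] at this
      exact this
  -- key lemma: S ⊆ closure (map (T-1) S)
  have keyA : (S : Set X) ⊆ closure ((Submodule.map ((T - 1 : X →L[ℂ] X) : X →ₗ[ℂ] X) S : Submodule ℂ X) : Set X) := by
    intro x hx
    set M := ((Submodule.map ((T - 1 : X →L[ℂ] X) : X →ₗ[ℂ] X) S : Submodule ℂ X) : Set X) with hM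
    have hdiff : ∀ j : ℕ, x - (T ^ j) x ∈ Submodule.map ((T - 1 : X →L[ℂ] X) : X →ₗ[ℂ] X) S := by
      intro j
      induction j with
      | zero => simp
      | succ j ih =>
        have h1 : (T - 1 : X →L[ℂ] X) ((T ^ j) x) ∈ Submodule.map ((T - 1 : X →L[ℂ] X) : X →ₗ[ℂ] X) S :=
          ⟨_, hpow_mem x hx j, rfl⟩
        have heq : x - (T ^ (j + 1)) x = (x - (T ^ j) x) - (T - 1 : X →L[ℂ] X) ((T ^ j) x) := by
          have : (T ^ (j + 1)) x = T ((T ^ j) x) := by rw [pow_succ']; rfl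
          rw [this]
          simp only [ContinuousLinearMap.sub_apply, ContinuousLinearMap.one_apply]
          abel
        rw [heq]
        exact sub_mem ih h1
    have hn : ∀ n, x - Tn n x ∈ closure M := by
      intro n
      obtain ⟨t, ht0, ht1, hts⟩ := hκ n
      have h1 : HasSum (fun j => (t j • T ^ j) x) (Tn n x) := by
        let e : (X →L[ℂ] X) →+ X :=
          { toFun := fun A => A x, map_zero' := rfl, map_add' := fun A B => rfl }
        have hc : Continuous ⇑e := (ContinuousLinearMap.apply ℂ X x).continuous
        exact hts.map e hc
      have h2 : HasSum (fun j => t j • x) x := by simpa using ht1.smul_const x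
      have h3 : HasSum (fun j => t j • x - (t j • T ^ j) x) (x - Tn n x) := h2.sub h1
      have hterm : ∀ j, t j • x - (t j • T ^ j) x ∈ Submodule.map ((T - 1 : X →L[ℂ] X) : X →ₗ[ℂ] X) S := by
        intro j
        have : t j • x - (t j • T ^ j) x = t j • (x - (T ^ j) x) := by
          rw [ContinuousLinearMap.smul_apply, smul_sub]
        rw [this]
        exact Submodule.smul_of_tower_mem _ _ (hdiff j)
      refine mem_closure_of_tendsto h3.tendsto_sum_nat (Eventually.of_forall fun N => ?_)
      exact sum_mem fun j _ => hterm j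
    have hxlim : Tendsto (fun n => x - Tn n x) atTop (𝓝 x) := by
      have := (tendsto_const_nhds : Tendsto (fun _ : ℕ => x) atTop (𝓝 x)).sub ((hmemS x).mp hx)
      simpa using this
    exact isClosed_closure.mem_of_tendsto hxlim (Eventually.of_forall hn)
  -- inclusion into closures of ranges
  have hRk : ∀ k : ℕ, (S : Set X) ⊆ closure (Set.range ⇑((T - 1 : X →L[ℂ] X) ^ k)) := by
    intro k
    induction k with
    | zero =>
      intro x _
      have : Set.range ⇑((T - 1 : X →L[ℂ] X) ^ 0) = Set.univ := by
        rw [pow_zero]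
        exact Set.eq_univ_of_forall fun y => ⟨y, rfl⟩
      rw [this, closure_univ]
      trivial
    | succ k ih =>
      intro x hx
      have h1 := keyA hx
      have hsub : ((Submodule.map ((T - 1 : X →L[ℂ] X) : X →ₗ[ℂ] X) S : Submodule ℂ X) : Set X)
          ⊆ closure (Set.range ⇑((T - 1 : X →L[ℂ] X) ^ (k + 1))) := by
        rintro _ ⟨y, hy, rfl⟩
        have hy' : y ∈ closure (Set.range ⇑((T - 1 : X →L[ℂ] X) ^ k)) := ih hy
        have h2 : (T - 1 : X →L[ℂ] X) y ∈
            closure ((T - 1 : X →L[ℂ] X) '' Set.range ⇑((T - 1 : X →L[ℂ] X) ^ k)) :=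
          image_closure_subset_closure_image (T - 1 : X →L[ℂ] X).continuous ⟨y, hy', rfl⟩
        refine closure_mono ?_ h2
        rintro _ ⟨_, ⟨w, rfl⟩, rfl⟩
        exact ⟨w, by rw [pow_succ']; rfl⟩
      exact closure_minimal hsub isClosed_closure h1
  -- closedness
  have hclosed : IsClosed (S : Set X) := by
    refine isClosed_of_closure_subset ?_
    intro x hx
    -- x lies in the closed subspace closure(range (T-1)^m)
    let Rm : Submodule ℂ X := (LinearMap.range (((T - 1 : X →L[ℂ] X) ^ m : X →L[ℂ] X) : X →ₗ[ℂ] X)).topologicalClosure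
    have hRmcoe : (Rm : Set X) = closure (Set.range ⇑((T - 1 : X →L[ℂ] X) ^ m)) := by
      rw [Submodule.topologicalClosure_coe]
      congr 1
    have hRmclosed : IsClosed (Rm : Set X) :=
      (LinearMap.range (((T - 1 : X →L[ℂ] X) ^ m : X →L[ℂ] X) : X →ₗ[ℂ] X)).isClosed_topologicalClosure
    have hSRm : (S : Set X) ⊆ (Rm : Set X) := by rw [hRmcoe]; exact hRk m
    have hxRm : x ∈ Rm := closure_minimal hSRm hRmclosed hx
    rw [SetLike.mem_coe, hmemS]
    rw [NormedAddCommGroup.tendsto_nhds_zero]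
    intro ε hε
    have hε2 : 0 < ε / (2 * C) := by positivity
    obtain ⟨y, hyS, hxy⟩ := Metric.mem_closure_iff.mp hx (ε / (2 * C)) hε2
    have hyRm : y ∈ Rm := hSRm hyS
    have hxyRm : x - y ∈ Rm := sub_mem hxRm hyRm
    have hbd : ∀ n, ‖Tn n (x - y)‖ ≤ C * ‖x - y‖ := by
      intro n
      apply hbdd n
      rw [← hRmcoe]
      exact hxyRm
    have hylim : Tendsto (fun n => Tn n y) atTop (𝓝 0) := (hmemS y).mp hyS
    have hev : ∀ᶠ n in atTop, ‖Tn n y‖ < ε / 2 := by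
      have := NormedAddCommGroup.tendsto_nhds_zero.mp hylim (ε / 2) (by positivity)
      exact this
    filter_upwards [hev] with n hn
    have hsplit : Tn n x = Tn n (x - y) + Tn n y := by rw [map_sub]; abel
    have hxy' : ‖x - y‖ < ε / (2 * C) := by rwa [← dist_eq_norm]
    calc ‖Tn n x‖ = ‖Tn n (x - y) + Tn n y‖ := by rw [hsplit]
      _ ≤ ‖Tn n (x - y)‖ + ‖Tn n y‖ := norm_add_le _ _
      _ ≤ C * ‖x - y‖ + ‖Tn n y‖ := by gcongr; exact hbd n
      _ < C * (ε / (2 * C)) + ε / 2 := by gcongr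
      _ = ε := by field_simp; ring
  refine ⟨S, ?_, hclosed, hRk⟩
  ext x
  rw [SetLike.mem_coe, hmemS, Set.mem_setOf_eq]
  exact tendsto_zero_iff_norm_tendsto_zero
end

section
/- Let {T_n} be a sequence in κ(T) and let k ≥ m be nonnegative integers. Assume there exists C > 0 with ‖T_n x‖ ≤ C‖x‖ for every n and every x in the closure of the range of (T−I)^m, and that ‖T_n (T−I)^k x‖ → 0 as n → ∞ for every x ∈ X. Then X_0 = closure(range((T−I)^k)). -/
open Filter Topology

section Aux
variable {X : Type*} [NormedAddCommGroup X] [NormedSpace ℂ X] [CompleteSpace X]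

lemma kappa_commute (T S : X →L[ℂ] X) (h : InKappa T S) : Commute T S := by
  obtain ⟨t, _, _, hS⟩ := h
  have h1 : HasSum (fun j => T * (t j • T ^ j)) (T * S) :=
    hS.map (AddMonoidHom.mulLeft T) (continuous_mul_left T)
  have h2 : HasSum (fun j => (t j • T ^ j) * T) (S * T) :=
    hS.map (AddMonoidHom.mulRight T) (continuous_mul_right T)
  have : (fun j => T * (t j • T ^ j)) = fun j => (t j • T ^ j) * T := by
    funext j
    rw [mul_smul_comm, smul_mul_assoc, ← pow_succ, ← pow_succ']
  rw [this] at h1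
  exact h1.unique h2

lemma kappa_sub_mem (T S : X →L[ℂ] X) (h : InKappa T S) (x : X) :
    x - S x ∈ closure (Set.range ⇑(T - 1)) := by
  obtain ⟨t, ht0, ht1, hS⟩ := h
  have hx : HasSum (fun j => t j • x) x := by simpa using ht1.smul_const x
  have hSx : HasSum (fun j => t j • (T ^ j) x) (S x) := by
    have := hS.map ((ContinuousLinearMap.apply ℂ X x).toLinearMap.toAddMonoidHom)
      (ContinuousLinearMap.apply ℂ X x).continuous
    exact this
  have hsub : HasSum (fun j => t j • (x - (T ^ j) x)) (x - S x) := by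
    have := hx.sub hSx
    simpa [smul_sub] using this
  have hmem : ∀ j, t j • (x - (T ^ j) x) ∈ LinearMap.range ((T - 1 : X →L[ℂ] X) : X →ₗ[ℂ] X) := by
    intro j
    apply Submodule.smul_of_tower_mem
    refine ⟨-(∑ i ∈ Finset.range j, T ^ i) x, ?_⟩
    have := congrArg (fun (A : X →L[ℂ] X) => A x) (mul_geom_sum T j)
    simp only [ContinuousLinearMap.mul_apply] at this
    simp only [map_neg, ContinuousLinearMap.coe_coe, this]
    simp [ContinuousLinearMap.sub_apply]
  have hcoe : (LinearMap.range ((T - 1 : X →L[ℂ] X) : X →ₗ[ℂ] X) : Set X) = Set.range ⇑(T - 1) :=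
    LinearMap.coe_range _
  rw [← hcoe]
  refine mem_closure_of_tendsto hsub.tendsto_sum_nat ?_
  filter_upwards with n
  exact Submodule.sum_mem _ fun i _ => hmem i

lemma kappa_step (T S : X →L[ℂ] X) (h : InKappa T S) (j : ℕ) (x : X)
    (hx : x ∈ closure (Set.range ⇑((T - 1) ^ j))) :
    x - S x ∈ closure (Set.range ⇑((T - 1) ^ (j + 1))) := by
  set Q : X →L[ℂ] X := T - 1 with hQ
  have hcomm : Commute Q S := (kappa_commute T S h).sub_left (Commute.one_left S)
  have hcommj : (Q ^ j) * S = S * (Q ^ j) := (hcomm.pow_left j).eq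
  set f : X →L[ℂ] X := 1 - S with hf
  have hfx : f x = x - S x := by simp [hf]
  rw [← hfx]
  have h1 : f x ∈ ⇑f '' closure (Set.range ⇑(Q ^ j)) := ⟨x, hx, rfl⟩
  have h2 : ⇑f '' closure (Set.range ⇑(Q ^ j)) ⊆ closure (⇑f '' Set.range ⇑(Q ^ j)) :=
    image_closure_subset_closure_image f.continuous
  have h3 : ⇑f '' Set.range ⇑(Q ^ j) ⊆ closure (Set.range ⇑(Q ^ (j + 1))) := by
    rintro _ ⟨_, ⟨z, rfl⟩, rfl⟩
    have hfz : f ((Q ^ j) z) = (Q ^ j) (z - S z) := by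
      have : S ((Q ^ j) z) = (Q ^ j) (S z) := by
        have := congrArg (fun (A : X →L[ℂ] X) => A z) hcommj
        simpa using this.symm
      rw [hf, ContinuousLinearMap.sub_apply, ContinuousLinearMap.one_apply, this, map_sub]
    rw [hfz]
    have hz : z - S z ∈ closure (Set.range ⇑Q) := kappa_sub_mem T S h z
    have h4 : (Q ^ j) (z - S z) ∈ ⇑(Q ^ j) '' closure (Set.range ⇑Q) := ⟨_, hz, rfl⟩
    have h5 : ⇑(Q ^ j) '' closure (Set.range ⇑Q) ⊆ closure (⇑(Q ^ j) '' Set.range ⇑Q) :=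
      image_closure_subset_closure_image (Q ^ j).continuous
    have h6 : ⇑(Q ^ j) '' Set.range ⇑Q = Set.range ⇑(Q ^ (j + 1)) := by
      rw [← Set.range_comp, pow_succ]
      rfl
    rw [← h6]
    exact h5 h4
  have := closure_mono h3 (h2 h1)
  rwa [closure_closure] at this

end Aux


/-- If a sequence {T_n} in κ(T) is bounded on the closure of the range of (T−I)^m,
k ≥ m, and T_n (T−I)^k → 0 strongly, then X₀ = closure(range((T−I)^k)). -/
theorem stmt1 {X : Type*} [NormedAddCommGroup X] [NormedSpace ℂ X] [CompleteSpace X]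
    (T : X →L[ℂ] X) (Tn : ℕ → X →L[ℂ] X) (hκ : ∀ n, InKappa T (Tn n))
    (k m : ℕ) (hkm : m ≤ k) (C : ℝ) (hC : 0 < C)
    (hbdd : ∀ n, ∀ x ∈ closure (Set.range ⇑((T - 1) ^ m)), ‖Tn n x‖ ≤ C * ‖x‖)
    (hconv : ∀ x : X, Tendsto (fun n => ‖Tn n (((T - 1) ^ k) x)‖) atTop (𝓝 0)) :
    {x : X | Tendsto (fun n => ‖Tn n x‖) atTop (𝓝 0)}
      = closure (Set.range ⇑((T - 1) ^ k)) := by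
  set Q : X →L[ℂ] X := T - 1 with hQ
  have hrange : Set.range ⇑(Q ^ k) ⊆ Set.range ⇑(Q ^ m) := by
    rw [show k = m + (k - m) from (Nat.add_sub_cancel' hkm).symm, pow_add]
    exact Set.range_comp_subset_range ⇑(Q ^ (k - m)) ⇑(Q ^ m)
  -- the closure of range Q^m as a submodule
  set Sm : Submodule ℂ X := (LinearMap.range ((Q ^ m : X →L[ℂ] X) : X →ₗ[ℂ] X)).topologicalClosure with hSm
  have hSmcoe : (Sm : Set X) = closure (Set.range ⇑(Q ^ m)) := by
    rw [hSm, Submodule.topologicalClosure_coe, LinearMap.coe_range, ContinuousLinearMap.coe_coe]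
  ext x
  simp only [Set.mem_setOf_eq]
  constructor
  · -- X₀ ⊆ closure range Q^k
    intro hx
    have hx0 : Tendsto (fun n => Tn n x) atTop (𝓝 0) :=
      tendsto_zero_iff_norm_tendsto_zero.mpr hx
    have key : ∀ j : ℕ, x ∈ closure (Set.range ⇑(Q ^ j)) := by
      intro j
      induction j with
      | zero =>
        simp [pow_zero, ContinuousLinearMap.one_def]
      | succ j ih =>
        have hmem : ∀ n, x - Tn n x ∈ closure (Set.range ⇑(Q ^ (j + 1))) :=
          fun n => kappa_step T (Tn n) (hκ n) j x ih
        have htend : Tendsto (fun n => x - Tn n x) atTop (𝓝 x) := by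
          simpa using hx0.const_sub x
        exact isClosed_closure.mem_of_tendsto htend (Eventually.of_forall hmem)
    exact key k
  · -- closure range Q^k ⊆ X₀
    intro hx
    rw [Metric.tendsto_atTop]
    intro ε hε
    have hε2C : 0 < ε / (2 * C) := by positivity
    obtain ⟨y, hy, hxy⟩ := Metric.mem_closure_iff.mp hx (ε / (2 * C)) hε2C
    obtain ⟨z, rfl⟩ := hy
    have hyconv := (Metric.tendsto_atTop.mp (hconv z)) (ε / 2) (by positivity)
    obtain ⟨N, hN⟩ := hyconv
    refine ⟨N, fun n hn => ?_⟩
    have hxm : x ∈ Sm := by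
      rw [← SetLike.mem_coe, hSmcoe]; exact closure_mono hrange hx
    have hym : (Q ^ k) z ∈ Sm := by
      rw [← SetLike.mem_coe, hSmcoe]
      exact subset_closure (hrange ⟨z, rfl⟩)
    have hsub : x - (Q ^ k) z ∈ Sm := Sm.sub_mem hxm hym
    have hb : ‖Tn n (x - (Q ^ k) z)‖ ≤ C * ‖x - (Q ^ k) z‖ := by
      apply hbdd n
      rw [← hSmcoe]; exact hsub
    have hd : ‖x - (Q ^ k) z‖ < ε / (2 * C) := by
      rwa [← dist_eq_norm]
    have h1 : ‖Tn n (x - (Q ^ k) z)‖ < ε / 2 := by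
      calc ‖Tn n (x - (Q ^ k) z)‖ ≤ C * ‖x - (Q ^ k) z‖ := hb
        _ < C * (ε / (2 * C)) := by exact mul_lt_mul_of_pos_left hd hC
        _ = ε / 2 := by field_simp
    have h2 : ‖Tn n ((Q ^ k) z)‖ < ε / 2 := by
      have := hN n hn
      rwa [Real.dist_eq, sub_zero, abs_of_nonneg (norm_nonneg _)] at this
    rw [Real.dist_eq, sub_zero, abs_of_nonneg (norm_nonneg _)]
    calc ‖Tn n x‖ = ‖Tn n ((x - (Q ^ k) z) + (Q ^ k) z)‖ := by rw [sub_add_cancel]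
      _ ≤ ‖Tn n (x - (Q ^ k) z)‖ + ‖Tn n ((Q ^ k) z)‖ := by
          rw [map_add]; exact norm_add_le _ _
      _ < ε / 2 + ε / 2 := add_lt_add h1 h2
      _ = ε := by ring
end

section
/- Suppose λT is weakly hypercyclic with support N for some λ ∈ ℂ with |λ| ≤ 1 and some positive integer N, i.e., there exists x₀ ∈ X such that {(λT)^{k₁}x₀ + ⋯ + (λT)^{k_N}x₀ : k₁, …, k_N ≥ 0} is dense in X for the weak topology. If {T_n} is a sequence in κ(T) with sup_n ‖T_n‖ < ∞ which is (n₀,0)-regular for some nonnegative integer n₀, then T_n x → 0 in norm for every x ∈ X. -/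
open Filter Topology

/-- (n₀,m)-regularity: ‖(T T_n − T_{n+n₀})x‖ → 0 for every x ∈ range((T−I)^m). -/
def RegularSeq {X : Type*} [NormedAddCommGroup X] [NormedSpace ℂ X]
    (T : X →L[ℂ] X) (Tn : ℕ → X →L[ℂ] X) (n₀ m : ℕ) : Prop :=
  ∀ x ∈ Set.range ⇑((T - 1) ^ m),
    Tendsto (fun n => ‖T (Tn n x) - Tn (n + n₀) x‖) atTop (𝓝 0)

/-- If λT is weakly hypercyclic with support N for some |λ| ≤ 1, and {T_n} ⊆ κ(T)
is bounded and (n₀,0)-regular, then T_n x → 0 for every x. -/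
theorem stmt7 {X : Type*} [NormedAddCommGroup X] [NormedSpace ℂ X] [CompleteSpace X]
    (T : X →L[ℂ] X)
    (lam : ℂ) (hlam : ‖lam‖ ≤ 1)
    (N : ℕ) (hN : 0 < N) (x₀ : X)
    (hdense : @Dense (WeakSpace ℂ X) _
      {y : X | ∃ k : Fin N → ℕ, y = ∑ i, ((lam • T) ^ (k i)) x₀})
    (Tn : ℕ → X →L[ℂ] X) (hκ : ∀ n, InKappa T (Tn n))
    (C : ℝ) (hbdd : ∀ n, ‖Tn n‖ ≤ C)
    (n₀ : ℕ) (hreg : RegularSeq T Tn n₀ 0) :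
    ∀ x : X, Tendsto (fun n => Tn n x) atTop (𝓝 0) := by
  classical
  set D : Set X := {y : X | ∃ k : Fin N → ℕ, y = ∑ i, ((lam • T) ^ (k i)) x₀} with hD_def
  have hC0 : (0 : ℝ) ≤ C := le_trans (norm_nonneg _) (hbdd 0)
  -- T commutes with each Tn n
  have hcomm : ∀ n, Commute T (Tn n) := by
    intro n
    obtain ⟨t, ht0, hts, hsum⟩ := hκ n
    have h1 : HasSum (fun j => t j • T ^ (j + 1)) (T * Tn n) := by
      simpa [mul_smul_comm, pow_succ'] using hsum.mul_left T
    have h2 : HasSum (fun j => t j • T ^ (j + 1)) (Tn n * T) := by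
      simpa [smul_mul_assoc, pow_succ] using hsum.mul_right T
    exact h1.unique h2
  -- Tn n commutes with T^k, as an identity on points
  have hcommk : ∀ (n k : ℕ) (x : X), Tn n ((T ^ k) x) = (T ^ k) (Tn n x) := by
    intro n k x
    have h := ((hcomm n).pow_left k).eq
    calc Tn n ((T ^ k) x) = (Tn n * T ^ k) x := rfl
      _ = (T ^ k * Tn n) x := by rw [h]
      _ = (T ^ k) (Tn n x) := rfl
  -- regularity for every x (m = 0)
  have hreg' : ∀ x : X,
      Tendsto (fun n => ‖T (Tn n x) - Tn (n + n₀) x‖) atTop (𝓝 0) := by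
    intro x
    exact hreg x ⟨x, by simp⟩
  -- iterated regularity
  have hiter : ∀ (k : ℕ) (x : X),
      Tendsto (fun n => ‖(T ^ k) (Tn n x) - Tn (n + k * n₀) x‖) atTop (𝓝 0) := by
    intro k
    induction k with
    | zero => intro x; simpa using tendsto_const_nhds
    | succ k ih =>
      intro x
      have h1 : Tendsto (fun n => ‖T ((T ^ k) (Tn n x)) - T (Tn (n + k * n₀) x)‖)
          atTop (𝓝 0) := by
        have hm := (ih x).const_mul ‖T‖
        rw [mul_zero] at hm
        refine squeeze_zero (fun n => norm_nonneg _) (fun n => ?_) hm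
        calc ‖T ((T ^ k) (Tn n x)) - T (Tn (n + k * n₀) x)‖
            = ‖T ((T ^ k) (Tn n x) - Tn (n + k * n₀) x)‖ := by rw [map_sub]
          _ ≤ ‖T‖ * ‖(T ^ k) (Tn n x) - Tn (n + k * n₀) x‖ := T.le_opNorm _
      have h2 : Tendsto (fun n => ‖T (Tn (n + k * n₀) x) - Tn (n + k * n₀ + n₀) x‖)
          atTop (𝓝 0) := (hreg' x).comp (tendsto_add_atTop_nat (k * n₀))
      have h3 := h1.add h2
      rw [add_zero] at h3
      refine squeeze_zero (fun n => norm_nonneg _) (fun n => ?_) h3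
      have hx : (T ^ (k + 1)) (Tn n x) = T ((T ^ k) (Tn n x)) := by
        rw [pow_succ']; rfl
      have hidx : n + (k + 1) * n₀ = n + k * n₀ + n₀ := by ring
      calc ‖(T ^ (k + 1)) (Tn n x) - Tn (n + (k + 1) * n₀) x‖
          = ‖(T ((T ^ k) (Tn n x)) - T (Tn (n + k * n₀) x))
              + (T (Tn (n + k * n₀) x) - Tn (n + k * n₀ + n₀) x)‖ := by
            rw [hx, hidx, sub_add_sub_cancel]
        _ ≤ ‖T ((T ^ k) (Tn n x)) - T (Tn (n + k * n₀) x)‖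
              + ‖T (Tn (n + k * n₀) x) - Tn (n + k * n₀ + n₀) x‖ := norm_add_le _ _
  set M : ℝ := N * (C * ‖x₀‖) with hM_def
  have hM0 : 0 ≤ M := by positivity
  -- uniform eventual bound on the dense set D
  have hD : ∀ y ∈ D, ∀ ε : ℝ, 0 < ε → ∀ᶠ n in atTop, ‖Tn n y‖ ≤ M + ε := by
    rintro y ⟨k, rfl⟩ ε hε
    have hεN : 0 < ε / N := by positivity
    have hev : ∀ᶠ n in atTop, ∀ i : Fin N,
        ‖(T ^ (k i)) (Tn n x₀) - Tn (n + (k i) * n₀) x₀‖ < ε / N := by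
      rw [eventually_all]
      intro i
      exact (hiter (k i) x₀).eventually_lt_const hεN
    filter_upwards [hev] with n hn
    have hTny : Tn n (∑ i, ((lam • T) ^ (k i)) x₀)
        = ∑ i, lam ^ (k i) • (T ^ (k i)) (Tn n x₀) := by
      rw [map_sum]
      refine Finset.sum_congr rfl fun i _ => ?_
      rw [smul_pow, ContinuousLinearMap.smul_apply, map_smul, hcommk]
    rw [hTny]
    calc ‖∑ i, lam ^ (k i) • (T ^ (k i)) (Tn n x₀)‖
        ≤ ∑ i : Fin N, ‖lam ^ (k i) • (T ^ (k i)) (Tn n x₀)‖ := norm_sum_le _ _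
      _ ≤ ∑ _i : Fin N, (C * ‖x₀‖ + ε / N) := by
          refine Finset.sum_le_sum fun i _ => ?_
          have h1 : ‖lam ^ (k i) • (T ^ (k i)) (Tn n x₀)‖
              ≤ ‖(T ^ (k i)) (Tn n x₀)‖ := by
            rw [norm_smul, norm_pow]
            have : ‖lam‖ ^ (k i) ≤ 1 := pow_le_one₀ (norm_nonneg _) hlam
            nlinarith [norm_nonneg ((T ^ (k i)) (Tn n x₀))]
          have h2 : ‖(T ^ (k i)) (Tn n x₀)‖
              ≤ ‖Tn (n + (k i) * n₀) x₀‖ + ε / N := by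
            have := norm_sub_norm_le ((T ^ (k i)) (Tn n x₀)) (Tn (n + (k i) * n₀) x₀)
            have hni := hn i
            linarith
          have h3 : ‖Tn (n + (k i) * n₀) x₀‖ ≤ C * ‖x₀‖ :=
            le_trans ((Tn (n + (k i) * n₀)).le_opNorm x₀)
              (mul_le_mul_of_nonneg_right (hbdd _) (norm_nonneg _))
          linarith
      _ = M + ε := by
          rw [Finset.sum_const, Finset.card_univ, Fintype.card_fin, nsmul_eq_mul]
          have hNne : (N : ℝ) ≠ 0 := Nat.cast_ne_zero.mpr hN.ne'
          field_simp [hM_def]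
          ring
  -- extend to the convex hull
  have hconv : ∀ y ∈ convexHull ℝ D, ∀ ε : ℝ, 0 < ε →
      ∀ᶠ n in atTop, ‖Tn n y‖ ≤ M + ε := by
    intro y hy ε hε
    have hsub : convexHull ℝ D ⊆ {z : X | ∀ᶠ n in atTop, ‖Tn n z‖ ≤ M + ε} := by
      apply convexHull_min
      · intro z hz
        exact hD z hz ε hε
      · intro a ha b hb p q hp hq hpq
        filter_upwards [ha, hb] with n h1 h2
        have : ‖Tn n (p • a + q • b)‖ ≤ p * ‖Tn n a‖ + q * ‖Tn n b‖ := by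
          rw [map_add, (Tn n).map_smul_of_tower, (Tn n).map_smul_of_tower]
          refine (norm_add_le _ _).trans ?_
          rw [norm_smul, norm_smul, Real.norm_of_nonneg hp, Real.norm_of_nonneg hq]
        calc ‖Tn n (p • a + q • b)‖ ≤ p * ‖Tn n a‖ + q * ‖Tn n b‖ := this
          _ ≤ p * (M + ε) + q * (M + ε) := by
              refine add_le_add (mul_le_mul_of_nonneg_left h1 hp)
                (mul_le_mul_of_nonneg_left h2 hq)
          _ = M + ε := by rw [← add_mul, hpq, one_mul]
    exact hsub hy
  -- the convex hull of D is dense in the norm topology (Mazur)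
  have himg : ∀ s : Set X, toWeakSpace ℂ X '' s = s := by
    intro s
    ext z
    constructor
    · rintro ⟨x, hx, rfl⟩; exact hx
    · intro hz; exact ⟨z, hz, rfl⟩
  have hdenseN : Dense (convexHull ℝ D) := by
    have hcv : Convex ℝ (convexHull ℝ D) := convex_convexHull ℝ D
    have h1 := hcv.toWeakSpace_closure (𝕜 := ℂ)
    rw [himg, himg] at h1
    rw [dense_iff_closure_eq] at hdense ⊢
    rw [h1]
    apply Set.eq_univ_of_univ_subset
    rw [← hdense]
    exact closure_mono (subset_convexHull ℝ D)
  -- uniform eventual bound on all of X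
  have key : ∀ x : X, ∀ ε : ℝ, 0 < ε → ∀ᶠ n in atTop, ‖Tn n x‖ ≤ M + ε := by
    intro x ε hε
    have hδ : 0 < ε / (2 * (C + 1)) := by positivity
    obtain ⟨z, hz, hxz⟩ : ∃ z ∈ convexHull ℝ D, dist x z < ε / (2 * (C + 1)) :=
      hdenseN.exists_dist_lt x hδ
    rw [dist_eq_norm] at hxz
    filter_upwards [hconv z hz (ε / 2) (by positivity)] with n hn
    have h1 : ‖Tn n x‖ ≤ ‖Tn n z‖ + ‖Tn n (x - z)‖ := by
      have : Tn n x = Tn n z + Tn n (x - z) := by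
        rw [← map_add]; congr 1; abel
      rw [this]; exact norm_add_le _ _
    have h2 : ‖Tn n (x - z)‖ ≤ C * ‖x - z‖ :=
      le_trans ((Tn n).le_opNorm _)
        (mul_le_mul_of_nonneg_right (hbdd n) (norm_nonneg _))
    have h3 : C * ‖x - z‖ ≤ ε / 2 := by
      have : C * ‖x - z‖ ≤ C * (ε / (2 * (C + 1))) :=
        mul_le_mul_of_nonneg_left hxz.le hC0
      calc C * ‖x - z‖ ≤ C * (ε / (2 * (C + 1))) := this
        _ ≤ ε / 2 := by
            rw [mul_comm, div_mul_eq_mul_div,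
              div_le_div_iff₀ (by positivity) (by norm_num : (0:ℝ) < 2)]
            nlinarith
    linarith
  -- conclude by scaling
  intro x
  rw [NormedAddCommGroup.tendsto_nhds_zero]
  intro ε hε
  set t : ℝ := (M + 1) / ε + 1 with ht_def
  have ht0 : 0 < t := by positivity
  filter_upwards [key (t • x) 1 one_pos] with n hn
  have h1 : ‖Tn n (t • x)‖ = t * ‖Tn n x‖ := by
    rw [(Tn n).map_smul_of_tower, norm_smul, Real.norm_of_nonneg ht0.le]
  rw [h1] at hn
  have h2 : ‖Tn n x‖ ≤ (M + 1) / t := by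
    rw [le_div_iff₀ ht0, mul_comm]
    exact hn
  have h3 : (M + 1) / t < ε := by
    rw [div_lt_iff₀ ht0]
    have : ε * t = M + 1 + ε := by
      rw [ht_def, mul_add, mul_one, mul_div_cancel₀ _ hε.ne']
    rw [this]
    linarith
  linarith
end

section
/- Let T ∈ B(X) be supercyclic and let {T_n} be a sequence in κ(T) with sup_n ‖T_n‖ < ∞ which is (n₀,0)-regular for some nonnegative integer n₀. If the adjoint T* has no eigenvalue of modulus 1, then T_n x → 0 in norm for every x ∈ X. -/
open Filter Topology

/-- T is supercyclic: the scaled orbit of some vector is dense. -/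
def Supercyclic {X : Type*} [NormedAddCommGroup X] [NormedSpace ℂ X]
    (T : X →L[ℂ] X) : Prop :=
  ∃ x : X, Dense {y : X | ∃ (c : ℂ) (n : ℕ), y = c • (T ^ n) x}

namespace Stmt8Aux

open Finset

variable {X : Type*} [NormedAddCommGroup X] [NormedSpace ℂ X]

/-- set of eventual upper bounds for the sequence of norms -/
def pS (Tn : ℕ → X →L[ℂ] X) (x : X) : Set ℝ := {a : ℝ | ∀ᶠ n in atTop, ‖Tn n x‖ ≤ a}

/-- the limsup seminorm -/
noncomputable def pp (Tn : ℕ → X →L[ℂ] X) (x : X) : ℝ := sInf (pS Tn x)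

variable {Tn : ℕ → X →L[ℂ] X} {C : ℝ} {T : X →L[ℂ] X} {n₀ : ℕ}

lemma mem_pS (hbdd : ∀ n, ‖Tn n‖ ≤ C) (x : X) : C * ‖x‖ ∈ pS Tn x := by
  refine Eventually.of_forall (fun n => ?_)
  exact (Tn n).le_opNorm x |>.trans (mul_le_mul_of_nonneg_right (hbdd n) (norm_nonneg x))

lemma pS_nonempty (hbdd : ∀ n, ‖Tn n‖ ≤ C) (x : X) : (pS Tn x).Nonempty :=
  ⟨_, mem_pS hbdd x⟩

lemma pS_bddBelow (x : X) : BddBelow (pS Tn x) := by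
  refine ⟨0, fun a ha => ?_⟩
  obtain ⟨n, hn⟩ := ha.exists
  exact le_trans (norm_nonneg _) hn

lemma pp_le {x : X} {B : ℝ} (hB : ∀ᶠ n in atTop, ‖Tn n x‖ ≤ B) : pp Tn x ≤ B :=
  csInf_le (pS_bddBelow x) hB

lemma pp_nonneg (hbdd : ∀ n, ‖Tn n‖ ≤ C) (x : X) : 0 ≤ pp Tn x := by
  refine le_csInf (pS_nonempty hbdd x) (fun b hb => ?_)
  obtain ⟨n, hn⟩ := hb.exists
  exact le_trans (norm_nonneg _) hn

lemma pp_le_norm (hbdd : ∀ n, ‖Tn n‖ ≤ C) (x : X) : pp Tn x ≤ C * ‖x‖ :=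
  pp_le (mem_pS hbdd x)

lemma eventually_le_pp (hbdd : ∀ n, ‖Tn n‖ ≤ C) (x : X) {ε : ℝ} (hε : 0 < ε) :
    ∀ᶠ n in atTop, ‖Tn n x‖ ≤ pp Tn x + ε := by
  by_contra h
  have hall : ∀ b ∈ pS Tn x, pp Tn x + ε ≤ b := by
    intro b hb
    by_contra hlt
    push_neg at hlt
    exact h (hb.mono (fun n hn => hn.trans hlt.le))
  have := le_csInf (pS_nonempty hbdd x) hall
  simp only [pp] at this
  linarith [this]

lemma pp_zero : pp Tn (0 : X) = 0 := by
  have h1 : pp Tn 0 ≤ 0 := pp_le (Eventually.of_forall (fun n => by simp))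
  have h2 : 0 ≤ pp Tn 0 := by
    refine le_csInf ⟨0, Eventually.of_forall (fun n => by simp)⟩ (fun b hb => ?_)
    obtain ⟨n, hn⟩ := hb.exists
    exact le_trans (norm_nonneg _) hn
  linarith

lemma pp_add_le (hbdd : ∀ n, ‖Tn n‖ ≤ C) (x y : X) :
    pp Tn (x + y) ≤ pp Tn x + pp Tn y := by
  refine le_of_forall_pos_le_add (fun ε hε => ?_)
  have hx := eventually_le_pp hbdd x (half_pos hε)
  have hy := eventually_le_pp hbdd y (half_pos hε)
  refine pp_le ((hx.and hy).mono (fun n ⟨h1, h2⟩ => ?_))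
  have : ‖Tn n (x + y)‖ ≤ ‖Tn n x‖ + ‖Tn n y‖ := by
    rw [map_add]; exact norm_add_le _ _
  linarith

lemma pp_smul (hbdd : ∀ n, ‖Tn n‖ ≤ C) (c : ℂ) (x : X) :
    pp Tn (c • x) = ‖c‖ * pp Tn x := by
  have key : ∀ (d : ℂ) (y : X), pp Tn (d • y) ≤ ‖d‖ * pp Tn y := by
    intro d y
    rcases eq_or_ne d 0 with rfl | hd
    · simp [pp_zero]
    · refine le_of_forall_pos_le_add (fun ε hε => ?_)
      have hεd : 0 < ε / ‖d‖ := div_pos hε (norm_pos_iff.mpr hd)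
      have hy := eventually_le_pp hbdd y hεd
      refine pp_le (hy.mono (fun n hn => ?_))
      have : ‖Tn n (d • y)‖ = ‖d‖ * ‖Tn n y‖ := by rw [map_smul, norm_smul]
      rw [this]
      calc ‖d‖ * ‖Tn n y‖ ≤ ‖d‖ * (pp Tn y + ε / ‖d‖) :=
            mul_le_mul_of_nonneg_left hn (norm_nonneg d)
        _ = ‖d‖ * pp Tn y + ε := by
            rw [mul_add, mul_div_cancel₀]
            exact norm_ne_zero_iff.mpr hd
  rcases eq_or_ne c 0 with rfl | hc
  · simp [pp_zero]
  · refine le_antisymm (key c x) ?_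
    have := key c⁻¹ (c • x)
    rw [smul_smul, inv_mul_cancel₀ hc, one_smul, norm_inv] at this
    have hcpos : 0 < ‖c‖ := norm_pos_iff.mpr hc
    calc ‖c‖ * pp Tn x ≤ ‖c‖ * (‖c‖⁻¹ * pp Tn (c • x)) :=
          mul_le_mul_of_nonneg_left this hcpos.le
      _ = pp Tn (c • x) := by
          rw [← mul_assoc, mul_inv_cancel₀ (norm_ne_zero_iff.mpr hc), one_mul]

lemma pp_neg (hbdd : ∀ n, ‖Tn n‖ ≤ C) (x : X) : pp Tn (-x) = pp Tn x := by
  have := pp_smul hbdd (-1) x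
  simpa using this

lemma pp_sub_le (hbdd : ∀ n, ‖Tn n‖ ≤ C) (x y : X) :
    pp Tn (x - y) ≤ pp Tn x + pp Tn y := by
  rw [sub_eq_add_neg]
  exact (pp_add_le hbdd x (-y)).trans (by rw [pp_neg hbdd])

lemma pp_sub_pp_le (hbdd : ∀ n, ‖Tn n‖ ≤ C) (x y : X) :
    pp Tn x - pp Tn y ≤ pp Tn (x - y) := by
  have := pp_add_le hbdd (x - y) y
  rw [sub_add_cancel] at this
  linarith

lemma pp_sum_le (hbdd : ∀ n, ‖Tn n‖ ≤ C) {ι : Type*} (s : Finset ι) (g : ι → X) :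
    pp Tn (∑ i ∈ s, g i) ≤ ∑ i ∈ s, pp Tn (g i) := by
  classical
  induction s using Finset.induction_on with
  | empty => simp [pp_zero]
  | insert a s hni ih =>
      rw [Finset.sum_insert hni, Finset.sum_insert hni]
      exact (pp_add_le hbdd _ _).trans (by linarith)

lemma comm_of_kappa {T S : X →L[ℂ] X} (h : InKappa T S) (x : X) :
    T (S x) = S (T x) := by
  obtain ⟨t, _, _, hS⟩ := h
  have hmul : T * S = S * T := by
    have h1 := hS.mapL ((ContinuousLinearMap.compL ℂ X X X) T)
    have h2 := hS.mapL ((ContinuousLinearMap.compL ℂ X X X).flip T)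
    have e1 : (fun j => (ContinuousLinearMap.compL ℂ X X X) T (t j • T ^ j)) =
        (fun j => t j • T ^ (j + 1)) := by
      funext j
      rw [ContinuousLinearMap.map_smul_of_tower]
      congr 1
      exact (pow_succ' T j).symm
    have e2 : (fun j => (ContinuousLinearMap.compL ℂ X X X).flip T (t j • T ^ j)) =
        (fun j => t j • T ^ (j + 1)) := by
      funext j
      rw [ContinuousLinearMap.map_smul_of_tower]
      congr 1
    rw [e1] at h1
    rw [e2] at h2
    have := h1.unique h2
    simp [ContinuousLinearMap.compL] at this
    exact this
  calc T (S x) = (T * S) x := rfl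
    _ = (S * T) x := by rw [hmul]
    _ = S (T x) := rfl

lemma pp_T_eq (hbdd : ∀ n, ‖Tn n‖ ≤ C)
    (hcomm : ∀ n (x : X), T (Tn n x) = Tn n (T x))
    (hreg' : ∀ x : X, Tendsto (fun n => ‖T (Tn n x) - Tn (n + n₀) x‖) atTop (𝓝 0))
    (x : X) : pp Tn (T x) = pp Tn x := by
  have tri1 : ∀ n, ‖T (Tn n x)‖ ≤ ‖Tn (n + n₀) x‖ + ‖T (Tn n x) - Tn (n + n₀) x‖ := by
    intro n
    calc ‖T (Tn n x)‖ = ‖Tn (n + n₀) x + (T (Tn n x) - Tn (n + n₀) x)‖ := by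
          congr 1; abel
      _ ≤ _ := norm_add_le _ _
  have tri2 : ∀ n, ‖Tn (n + n₀) x‖ ≤ ‖T (Tn n x)‖ + ‖T (Tn n x) - Tn (n + n₀) x‖ := by
    intro n
    calc ‖Tn (n + n₀) x‖ = ‖T (Tn n x) - (T (Tn n x) - Tn (n + n₀) x)‖ := by
          congr 1; abel
      _ ≤ ‖T (Tn n x)‖ + ‖T (Tn n x) - Tn (n + n₀) x‖ := norm_sub_le _ _
  refine le_antisymm ?_ ?_
  · refine le_of_forall_pos_le_add (fun ε hε => ?_)
    have h1 : ∀ᶠ n in atTop, ‖Tn n x‖ ≤ pp Tn x + ε / 2 :=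
      eventually_le_pp hbdd x (half_pos hε)
    obtain ⟨N, hN⟩ := eventually_atTop.mp h1
    have h2 : ∀ᶠ n in atTop, ‖T (Tn n x) - Tn (n + n₀) x‖ < ε / 2 :=
      (hreg' x).eventually_lt_const (half_pos hε)
    obtain ⟨N2, hN2⟩ := eventually_atTop.mp h2
    refine pp_le (eventually_atTop.mpr ⟨max N N2, fun n hn => ?_⟩)
    have e1 : ‖Tn n (T x)‖ = ‖T (Tn n x)‖ := by rw [hcomm]
    have e2 := hN (n + n₀) (le_trans (le_trans (le_max_left N N2) hn) (Nat.le_add_right n n₀))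
    have e3 := hN2 n (le_trans (le_max_right N N2) hn)
    have := tri1 n
    rw [e1]
    linarith
  · refine le_of_forall_pos_le_add (fun ε hε => ?_)
    have h1 : ∀ᶠ n in atTop, ‖Tn n (T x)‖ ≤ pp Tn (T x) + ε / 2 :=
      eventually_le_pp hbdd (T x) (half_pos hε)
    obtain ⟨N, hN⟩ := eventually_atTop.mp h1
    have h2 : ∀ᶠ n in atTop, ‖T (Tn n x) - Tn (n + n₀) x‖ < ε / 2 :=
      (hreg' x).eventually_lt_const (half_pos hε)
    obtain ⟨N2, hN2⟩ := eventually_atTop.mp h2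
    refine pp_le (eventually_atTop.mpr ⟨max N N2 + n₀, fun m hm => ?_⟩)
    set n := m - n₀ with hn
    have hmn : n + n₀ = m := Nat.sub_add_cancel (le_trans (Nat.le_add_left n₀ _) hm)
    have hnN : N ≤ n ∧ N2 ≤ n := by
      constructor <;>
      · have : max N N2 ≤ n := by omega
        omega
    have e1 : ‖Tn n (T x)‖ = ‖T (Tn n x)‖ := by rw [hcomm]
    have e2 := hN n hnN.1
    have e3 := hN2 n hnN.2
    have := tri2 n
    rw [e1] at e2
    rw [← hmn]
    linarith

lemma pp_pow_eq (hbdd : ∀ n, ‖Tn n‖ ≤ C)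
    (hcomm : ∀ n (x : X), T (Tn n x) = Tn n (T x))
    (hreg' : ∀ x : X, Tendsto (fun n => ‖T (Tn n x) - Tn (n + n₀) x‖) atTop (𝓝 0))
    (k : ℕ) (x : X) : pp Tn ((T ^ k) x) = pp Tn x := by
  induction k generalizing x with
  | zero => simp
  | succ k ih =>
      have : (T ^ (k + 1)) x = (T ^ k) (T x) := by
        rw [pow_succ]; rfl
      rw [this, ih (T x), pp_T_eq hbdd hcomm hreg' x]

lemma coeff_unique (hbdd : ∀ n, ‖Tn n‖ ≤ C) {y₀ : X} (hr : 0 < pp Tn y₀) {z : X} {a b : ℂ}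
    (ha : pp Tn (z - a • y₀) = 0) (hb : pp Tn (z - b • y₀) = 0) : a = b := by
  have hv : (a - b) • y₀ = (z - b • y₀) - (z - a • y₀) := by
    rw [sub_smul]; abel
  have h1 : pp Tn ((a - b) • y₀) ≤ 0 := by
    rw [hv]
    have := pp_sub_le hbdd (z - b • y₀) (z - a • y₀)
    rw [ha, hb] at this
    linarith
  rw [pp_smul hbdd] at h1
  have : ‖a - b‖ ≤ 0 := by
    by_contra hpos
    push_neg at hpos
    nlinarith
  have : a - b = 0 := norm_le_zero_iff.mp this
  exact sub_eq_zero.mp this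

lemma exists_coeff (hbdd : ∀ n, ‖Tn n‖ ≤ C) {y₀ : X} (hr : 0 < pp Tn y₀) {z : X}
    (hz : ∀ ε : ℝ, 0 < ε → ∃ a : ℂ, pp Tn (z - a • y₀) < ε) :
    ∃ a : ℂ, pp Tn (z - a • y₀) = 0 := by
  set r := pp Tn y₀ with hrdef
  have hpos : ∀ k : ℕ, (0:ℝ) < 1 / (k + 1) := fun k => by positivity
  set g : ℕ → ℂ := fun k => (hz (1 / (k + 1)) (hpos k)).choose with hg
  have hgs : ∀ k, pp Tn (z - g k • y₀) < 1 / (k + 1) :=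
    fun k => (hz (1 / (k + 1)) (hpos k)).choose_spec
  have hbound : ∀ k l : ℕ, ‖g k - g l‖ * r ≤ 1 / (k + 1) + 1 / (l + 1) := by
    intro k l
    have hv : (g k - g l) • y₀ = (z - g l • y₀) - (z - g k • y₀) := by
      rw [sub_smul]; abel
    have := pp_sub_le hbdd (z - g l • y₀) (z - g k • y₀)
    rw [← hv] at this
    rw [pp_smul hbdd] at this
    have hk := (hgs k).le
    have hl := (hgs l).le
    linarith
  have hcauchy : CauchySeq g := by
    rw [Metric.cauchySeq_iff']
    intro ε hε
    obtain ⟨N, hN⟩ := exists_nat_gt (2 / (r * ε))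
    refine ⟨N, fun n hn => ?_⟩
    rw [dist_eq_norm]
    have h1 := hbound n N
    have h2 : (1:ℝ) / (n + 1) ≤ 1 / (N + 1) := by
      apply one_div_le_one_div_of_le
      · positivity
      · exact_mod_cast by omega
    have h3 : (2:ℝ) / (N + 1) < r * ε := by
      rw [div_lt_iff₀ (by positivity)]
      have hrε : 0 < r * ε := mul_pos hr hε
      rw [div_lt_iff₀ hrε] at hN
      nlinarith [hN]
    have : ‖g n - g N‖ * r < r * ε := by
      have h4 : (2:ℝ) / (N+1) = 1 / (N+1) + 1 / (N+1) := by ring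
      linarith
    nlinarith [norm_nonneg (g n - g N)]
  obtain ⟨a, ha⟩ := cauchySeq_tendsto_of_complete hcauchy
  refine ⟨a, le_antisymm ?_ ?_⟩
  · have hub : ∀ k, pp Tn (z - a • y₀) ≤ 1 / (k + 1) + ‖g k - a‖ * r := by
      intro k
      have hv : z - a • y₀ = (z - g k • y₀) + (g k - a) • y₀ := by
        rw [sub_smul]; abel
      rw [hv]
      have := pp_add_le hbdd (z - g k • y₀) ((g k - a) • y₀)
      rw [pp_smul hbdd] at this
      have hk := (hgs k).le
      linarith
    have hten : Tendsto (fun k : ℕ => 1 / ((k:ℝ) + 1) + ‖g k - a‖ * r) atTop (𝓝 0) := by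
      have t1 : Tendsto (fun k : ℕ => 1 / ((k:ℝ) + 1)) atTop (𝓝 0) :=
        tendsto_one_div_add_atTop_nhds_zero_nat
      have t2 : Tendsto (fun k => ‖g k - a‖) atTop (𝓝 0) :=
        tendsto_iff_norm_sub_tendsto_zero.mp ha
      have t3 : Tendsto (fun k => ‖g k - a‖ * r) atTop (𝓝 (0 * r)) := t2.mul_const r
      rw [zero_mul] at t3
      have := t1.add t3
      rwa [add_zero] at this
    exact ge_of_tendsto' hten hub
  · exact pp_nonneg hbdd _

end Stmt8Aux

set_option maxHeartbeats 2000000 in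
open Stmt8Aux Finset in
/-- If T is supercyclic, {T_n} ⊆ κ(T) is bounded and (n₀,0)-regular, and the
adjoint T* has no eigenvalue of modulus 1, then T_n x → 0 for every x ∈ X. -/
theorem stmt8 {X : Type*} [NormedAddCommGroup X] [NormedSpace ℂ X] [CompleteSpace X]
    (T : X →L[ℂ] X) (hsc : Supercyclic T)
    (Tn : ℕ → X →L[ℂ] X) (hκ : ∀ n, InKappa T (Tn n))
    (C : ℝ) (hbdd : ∀ n, ‖Tn n‖ ≤ C)
    (n₀ : ℕ) (hreg : RegularSeq T Tn n₀ 0)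
    (hnoeig : ∀ μ : ℂ, ‖μ‖ = 1 →
      ∀ f : X →L[ℂ] ℂ, (∀ x : X, f (T x) = μ * f x) → f = 0) :
    ∀ x : X, Tendsto (fun n => Tn n x) atTop (𝓝 0) := by
  classical
  set C' := max C 1 with hC'def
  have hC' : (0:ℝ) < C' := lt_of_lt_of_le one_pos (le_max_right C 1)
  have hbdd' : ∀ n, ‖Tn n‖ ≤ C' := fun n => (hbdd n).trans (le_max_left C 1)
  have hcomm : ∀ n (x : X), T (Tn n x) = Tn n (T x) := fun n x => comm_of_kappa (hκ n) x
  have hreg' : ∀ x : X, Tendsto (fun n => ‖T (Tn n x) - Tn (n + n₀) x‖) atTop (𝓝 0) := by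
    intro x
    refine hreg x ⟨x, ?_⟩
    rw [pow_zero]
    rfl
  obtain ⟨y₀, hy₀d⟩ := hsc
  have hdens : ∀ (z : X) (ε : ℝ), 0 < ε → ∃ (c : ℂ) (n : ℕ), ‖z - c • (T ^ n) y₀‖ < ε := by
    intro z ε hε
    obtain ⟨w, hws, hwd⟩ := Metric.mem_closure_iff.mp (hy₀d z) ε hε
    obtain ⟨c, n, rfl⟩ := hws
    exact ⟨c, n, by rwa [← dist_eq_norm]⟩
  have hppy : pp Tn y₀ = 0 := by
    by_contra hne
    have hr : 0 < pp Tn y₀ := lt_of_le_of_ne (pp_nonneg hbdd' y₀) (Ne.symm hne)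
    by_cases hA : ∀ ε : ℝ, 0 < ε → ∃ a : ℂ, pp Tn (T y₀ - a • y₀) < ε
    · -- CASE A : the closure of the line ℂ y₀ contains T y₀; construct an eigenfunctional
      obtain ⟨μ, hμ0⟩ := exists_coeff hbdd' hr hA
      have hpTy : pp Tn (T y₀) = pp Tn y₀ := pp_T_eq hbdd' hcomm hreg' y₀
      have hμabs : ‖μ‖ = 1 := by
        have e1 : pp Tn (μ • y₀) = ‖μ‖ * pp Tn y₀ := pp_smul hbdd' μ y₀
        have i1 : pp Tn (T y₀) ≤ pp Tn (T y₀ - μ • y₀) + pp Tn (μ • y₀) := by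
          have := pp_add_le hbdd' (T y₀ - μ • y₀) (μ • y₀)
          rwa [sub_add_cancel] at this
        have i3 : pp Tn (μ • y₀ - T y₀) = 0 := by
          rw [show μ • y₀ - T y₀ = -(T y₀ - μ • y₀) by abel, pp_neg hbdd', hμ0]
        have i2 : pp Tn (μ • y₀) ≤ pp Tn (μ • y₀ - T y₀) + pp Tn (T y₀) := by
          have := pp_add_le hbdd' (μ • y₀ - T y₀) (T y₀)
          rwa [sub_add_cancel] at this
        have heq : ‖μ‖ * pp Tn y₀ = pp Tn y₀ := by
          rw [hμ0] at i1
          rw [i3] at i2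
          rw [e1] at i1 i2
          rw [hpTy] at i1 i2
          linarith
        have : (‖μ‖ - 1) * pp Tn y₀ = 0 := by linarith
        rcases mul_eq_zero.mp this with h | h
        · linarith
        · exact absurd h (ne_of_gt hr)
      have hpow : ∀ n : ℕ, pp Tn ((T ^ n) y₀ - μ ^ n • y₀) = 0 := by
        intro n
        induction n with
        | zero =>
            have : (T ^ 0) y₀ - μ ^ 0 • y₀ = 0 := by
              rw [pow_zero, pow_zero, one_smul]
              simp
            rw [this, pp_zero]
        | succ n ih =>
            have e : T ((T ^ n) y₀) = (T ^ (n+1)) y₀ := by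
              rw [pow_succ']; rfl
            have hv : (T ^ (n+1)) y₀ - μ ^ (n+1) • y₀
                = T ((T ^ n) y₀ - μ ^ n • y₀) + μ ^ n • (T y₀ - μ • y₀) := by
              rw [map_sub, map_smul, smul_sub, smul_smul, ← pow_succ, e]
              abel
            have h1 := pp_add_le hbdd' (T ((T ^ n) y₀ - μ ^ n • y₀)) (μ ^ n • (T y₀ - μ • y₀))
            rw [← hv] at h1
            rw [pp_T_eq hbdd' hcomm hreg', ih] at h1
            rw [pp_smul hbdd', hμ0, mul_zero] at h1
            exact le_antisymm (by linarith) (pp_nonneg hbdd' _)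
      have hline : ∀ z : X, ∀ ε : ℝ, 0 < ε → ∃ a : ℂ, pp Tn (z - a • y₀) < ε := by
        intro z ε hε
        obtain ⟨c, n, hcn⟩ := hdens z (ε / (2 * C')) (by positivity)
        refine ⟨c * μ ^ n, ?_⟩
        have h1 : pp Tn (z - c • (T ^ n) y₀) ≤ C' * (ε / (2 * C')) :=
          (pp_le_norm hbdd' _).trans (mul_le_mul_of_nonneg_left hcn.le hC'.le)
        have h3 : pp Tn (c • (T ^ n) y₀ - (c * μ ^ n) • y₀) = 0 := by
          rw [show c • (T ^ n) y₀ - (c * μ ^ n) • y₀ = c • ((T ^ n) y₀ - μ ^ n • y₀) by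
            rw [smul_sub, smul_smul], pp_smul hbdd', hpow n, mul_zero]
        have h5 := pp_add_le hbdd' (z - c • (T ^ n) y₀) (c • (T ^ n) y₀ - (c * μ ^ n) • y₀)
        rw [show (z - c • (T ^ n) y₀) + (c • (T ^ n) y₀ - (c * μ ^ n) • y₀)
            = z - (c * μ ^ n) • y₀ by abel] at h5
        have hCε : C' * (ε / (2 * C')) = ε / 2 := by
          field_simp
        rw [hCε] at h1
        rw [h3] at h5
        linarith
      have hex : ∀ z : X, ∃ a : ℂ, pp Tn (z - a • y₀) = 0 :=
        fun z => exists_coeff hbdd' hr (hline z)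
      set F : X → ℂ := fun z => (hex z).choose with hFdef
      have hFs : ∀ z, pp Tn (z - F z • y₀) = 0 := fun z => (hex z).choose_spec
      have hFu : ∀ z (a : ℂ), pp Tn (z - a • y₀) = 0 → F z = a :=
        fun z a ha => coeff_unique hbdd' hr (hFs z) ha
      have hFadd : ∀ z w, F (z + w) = F z + F w := by
        intro z w
        apply hFu
        have hv : z + w - (F z + F w) • y₀ = (z - F z • y₀) + (w - F w • y₀) := by
          rw [add_smul]; abel
        rw [hv]
        have h := pp_add_le hbdd' (z - F z • y₀) (w - F w • y₀)
        rw [hFs, hFs] at h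
        exact le_antisymm (by linarith) (pp_nonneg hbdd' _)
      have hFsmul : ∀ (c : ℂ) z, F (c • z) = c * F z := by
        intro c z
        apply hFu
        rw [show c • z - (c * F z) • y₀ = c • (z - F z • y₀) by rw [smul_sub, smul_smul],
          pp_smul hbdd', hFs, mul_zero]
      have hFbnd : ∀ z, ‖F z‖ ≤ (C' / pp Tn y₀) * ‖z‖ := by
        intro z
        have h1 : pp Tn (F z • y₀) ≤ pp Tn z := by
          have h := pp_sub_le hbdd' z (z - F z • y₀)
          rw [hFs, show z - (z - F z • y₀) = F z • y₀ by abel] at h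
          linarith
        rw [pp_smul hbdd'] at h1
        have h2 := pp_le_norm hbdd' z
        rw [div_mul_eq_mul_div, le_div_iff₀ hr]
        calc ‖F z‖ * pp Tn y₀ ≤ pp Tn z := h1
          _ ≤ C' * ‖z‖ := h2
      set Flin : X →ₗ[ℂ] ℂ :=
        { toFun := F
          map_add' := hFadd
          map_smul' := by intro c z; simpa using hFsmul c z } with hFlin
      set f : X →L[ℂ] ℂ := LinearMap.mkContinuous Flin (C' / pp Tn y₀) hFbnd with hfdef
      have hfap : ∀ z, f z = F z := fun z => rfl
      have hfT : ∀ x : X, f (T x) = μ * f x := by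
        intro x
        rw [hfap, hfap]
        apply hFu
        have hv : T x - (μ * F x) • y₀ = T (x - F x • y₀) + F x • (T y₀ - μ • y₀) := by
          rw [map_sub, map_smul, smul_sub, smul_smul, mul_comm μ (F x)]
          abel
        rw [hv]
        have h := pp_add_le hbdd' (T (x - F x • y₀)) (F x • (T y₀ - μ • y₀))
        rw [pp_T_eq hbdd' hcomm hreg', hFs, pp_smul hbdd', hμ0, mul_zero] at h
        exact le_antisymm (by linarith) (pp_nonneg hbdd' _)
      have hf0 := hnoeig μ hμabs f hfT
      have hFy₀ : F y₀ = 1 := by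
        apply hFu
        rw [one_smul, sub_self, pp_zero]
      have : f y₀ = 0 := by rw [hf0]; rfl
      rw [hfap, hFy₀] at this
      exact one_ne_zero this
    · -- CASE B : derive a contradiction
      push_neg at hA
      obtain ⟨ε₀, hε₀, hB⟩ := hA
      -- Step 1 : T has dense range (or X = ℂ y₀, impossible)
      have hMall : ∀ z : X, z ∈ closure (Set.range ⇑T) := by
        set M : Submodule ℂ X := (LinearMap.range (T : X →ₗ[ℂ] X)).topologicalClosure with hMdef
        set L : Submodule ℂ X := Submodule.span ℂ ({y₀} : Set X) with hLdef
        haveI : FiniteDimensional ℂ L := FiniteDimensional.span_of_finite ℂ (Set.finite_singleton y₀)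
        have hMclosed : IsClosed (M : Set X) := Submodule.isClosed_topologicalClosure _
        have hLclosed : IsClosed (L : Set X) := Submodule.closed_of_finiteDimensional L
        have hunion : ∀ z : X, z ∈ M ∨ z ∈ L := by
          intro z
          have hz : z ∈ closure {y : X | ∃ (c : ℂ) (n : ℕ), y = c • (T ^ n) y₀} := hy₀d z
          have hsub : {y : X | ∃ (c : ℂ) (n : ℕ), y = c • (T ^ n) y₀} ⊆ (M : Set X) ∪ (L : Set X) := by
            rintro y ⟨c, n, rfl⟩
            cases n with
            | zero =>
                right
                rw [pow_zero]
                exact L.smul_mem c (by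
                  show (1 : X →L[ℂ] X) y₀ ∈ L
                  exact Submodule.mem_span_singleton_self y₀)
            | succ k =>
                left
                refine M.smul_mem c ?_
                have : (T ^ (k+1)) y₀ = T ((T ^ k) y₀) := by rw [pow_succ']; rfl
                rw [this]
                apply Submodule.le_topologicalClosure
                exact ⟨(T ^ k) y₀, rfl⟩
          have := closure_minimal hsub (hMclosed.union hLclosed) hz
          exact this
        by_cases hLall : ∀ z : X, z ∈ L
        · -- X = ℂ y₀ : then T y₀ = τ y₀, contradicting case B
          exfalso
          obtain ⟨τ, hτ⟩ := Submodule.mem_span_singleton.mp (hLall (T y₀))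
          have : pp Tn (T y₀ - τ • y₀) = 0 := by
            rw [hτ, sub_self, pp_zero]
          have := hB τ
          linarith
        · push_neg at hLall
          obtain ⟨b, hb⟩ := hLall
          intro z
          have hzM : z ∈ M := by
            by_contra hzM
            have hzL : z ∈ L := (hunion z).resolve_left hzM
            have hbM : b ∈ M := (hunion b).resolve_right hb
            rcases hunion (z + b) with h | h
            · exact hzM (by simpa using M.sub_mem h hbM)
            · exact hb (by simpa using L.sub_mem h hzL)
          have : (M : Set X) = closure (Set.range ⇑T) := by
            rw [hMdef, Submodule.topologicalClosure_coe, LinearMap.coe_range]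
            rfl
          rw [← this]
          exact hzM
      -- Step 2 : tail density
      have htail : ∀ (z : X) (ε : ℝ), 0 < ε →
          ∃ (c : ℂ) (m : ℕ), 1 ≤ m ∧ ‖z - c • (T ^ m) y₀‖ < ε := by
        intro z ε hε
        obtain ⟨w, hws, hwd⟩ := Metric.mem_closure_iff.mp (hMall z) (ε/2) (half_pos hε)
        obtain ⟨v, rfl⟩ := hws
        obtain ⟨c, n, hv⟩ := hdens v (ε / (2 * (‖T‖ + 1)))
          (by positivity)
        refine ⟨c, n + 1, by omega, ?_⟩
        have e1 : c • (T ^ (n+1)) y₀ = T (c • (T ^ n) y₀) := by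
          rw [map_smul]
          congr 1
          rw [pow_succ']; rfl
        have h2 : ‖T v - T (c • (T ^ n) y₀)‖ ≤ ‖T‖ * (ε / (2 * (‖T‖ + 1))) := by
          rw [← map_sub]
          exact (T.le_opNorm _).trans
            (mul_le_mul_of_nonneg_left hv.le (norm_nonneg T))
        have h3 : ‖T‖ * (ε / (2 * (‖T‖ + 1))) < ε / 2 := by
          have hT0 : (0:ℝ) < ‖T‖ + 1 := by positivity
          have hkey : ‖T‖ * (ε / (2 * (‖T‖ + 1))) = (‖T‖ / (‖T‖ + 1)) * (ε / 2) := by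
            rw [div_mul_div_comm]
            rw [mul_div_assoc]
            congr 1
            rw [mul_comm]
          rw [hkey]
          have hlt : ‖T‖ / (‖T‖ + 1) < 1 := (div_lt_one hT0).mpr (by linarith)
          calc (‖T‖ / (‖T‖ + 1)) * (ε / 2) < 1 * (ε / 2) :=
                mul_lt_mul_of_pos_right hlt (half_pos hε)
            _ = ε / 2 := one_mul _
        have h4 : ‖z - c • (T ^ (n+1)) y₀‖
            ≤ ‖z - T v‖ + ‖T v - T (c • (T ^ n) y₀)‖ := by
          rw [e1]
          calc ‖z - T (c • (T ^ n) y₀)‖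
              = ‖(z - T v) + (T v - T (c • (T ^ n) y₀))‖ := by congr 1; abel
            _ ≤ _ := norm_add_le _ _
        rw [dist_eq_norm] at hwd
        calc ‖z - c • (T ^ (n+1)) y₀‖ ≤ ‖z - T v‖ + ‖T v - T (c • (T ^ n) y₀)‖ := h4
          _ < ε/2 + ε/2 := by
              apply add_lt_add_of_lt_of_le hwd
              linarith
          _ = ε := by ring
      -- Step 3 : an almost-return with m ≥ 1, normalized to modulus one
      set r := pp Tn y₀ with hrdef
      set δ := min r ε₀ with hδdef
      have hδpos : 0 < δ := lt_min hr hε₀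
      have hη : (0:ℝ) < δ / (16 * C') := by positivity
      obtain ⟨c, m, hm1, hret⟩ := htail y₀ (δ / (16 * C')) hη
      have hCfact : C' * (δ / (16 * C')) = δ / 16 := by
        field_simp
      have hβ : pp Tn (y₀ - c • (T ^ m) y₀) ≤ δ / 16 := by
        refine (pp_le_norm hbdd' _).trans ?_
        have := mul_le_mul_of_nonneg_left hret.le hC'.le
        rwa [hCfact] at this
      have hppTm : pp Tn ((T ^ m) y₀) = r := by
        rw [pp_pow_eq hbdd' hcomm hreg', ← hrdef]
      have hδr : δ ≤ r := min_le_left _ _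
      have hδε : δ ≤ ε₀ := min_le_right _ _
      have hc0 : c ≠ 0 := by
        intro h
        rw [h, zero_smul, sub_zero, ← hrdef] at hβ
        linarith
      have hcr : pp Tn (c • (T ^ m) y₀) = ‖c‖ * r := by rw [pp_smul hbdd', hppTm]
      have habs1 : ‖c‖ * r - r ≤ δ / 16 := by
        have h := pp_sub_pp_le hbdd' (c • (T ^ m) y₀) y₀
        rw [hcr, ← hrdef,
          show c • (T ^ m) y₀ - y₀ = -(y₀ - c • (T ^ m) y₀) by abel, pp_neg hbdd'] at h
        linarith
      have habs2 : r - ‖c‖ * r ≤ δ / 16 := by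
        have h := pp_sub_pp_le hbdd' y₀ (c • (T ^ m) y₀)
        rw [hcr, ← hrdef] at h
        linarith
      have hcnorm : (0:ℝ) < ‖c‖ := norm_pos_iff.mpr hc0
      set cc : ℂ := (‖c‖ : ℂ)⁻¹ * c with hccdef
      have hccabs : ‖cc‖ = 1 := by
        rw [hccdef, norm_mul, norm_inv, Complex.norm_real, Real.norm_eq_abs, abs_of_pos hcnorm,
          inv_mul_cancel₀ (ne_of_gt hcnorm)]
      have hccc : ‖c - cc‖ = |‖c‖ - 1| := by
        have hv : c - cc = ((1 : ℂ) - (‖c‖:ℂ)⁻¹) * c := by rw [hccdef]; ring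
        rw [hv, norm_mul]
        have h2 : ((1:ℂ) - (‖c‖:ℂ)⁻¹) = (((1 - ‖c‖⁻¹ : ℝ)) : ℂ) := by push_cast; ring
        rw [h2, Complex.norm_real, Real.norm_eq_abs,
          show |1 - ‖c‖⁻¹| * ‖c‖ = |(1 - ‖c‖⁻¹) * ‖c‖| by rw [abs_mul, abs_of_pos hcnorm]]
        congr 1
        rw [sub_mul, one_mul, inv_mul_cancel₀ (ne_of_gt hcnorm)]
      have hβ2 : pp Tn (y₀ - cc • (T ^ m) y₀) ≤ δ / 8 := by
        have hsplit : y₀ - cc • (T ^ m) y₀ = (y₀ - c • (T ^ m) y₀) + (c - cc) • (T ^ m) y₀ := by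
          rw [sub_smul]; abel
        have h := pp_add_le hbdd' (y₀ - c • (T ^ m) y₀) ((c - cc) • (T ^ m) y₀)
        rw [← hsplit, pp_smul hbdd', hppTm, hccc] at h
        have habs : |‖c‖ - 1| * r ≤ δ / 16 := by
          have h1 : (‖c‖ - 1) * r ≤ δ/16 := by nlinarith [habs1]
          have h2 : (-(‖c‖ - 1)) * r ≤ δ/16 := by nlinarith [habs2]
          rcases abs_cases (‖c‖ - 1) with ⟨he, _⟩ | ⟨he, _⟩
          · rw [he]; exact h1
          · rw [he]; exact h2
        linarith
      have hcc0 : cc ≠ 0 := by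
        intro h
        rw [h] at hccabs
        simp at hccabs
      set e : ℂ := cc⁻¹ with hedef
      have heabs : ‖e‖ = 1 := by rw [hedef, norm_inv, hccabs, inv_one]
      have hee : pp Tn ((T ^ m) y₀ - e • y₀) ≤ δ / 8 := by
        have hv : (T ^ m) y₀ - e • y₀ = -(cc⁻¹ • (y₀ - cc • (T ^ m) y₀)) := by
          rw [smul_sub, smul_smul, inv_mul_cancel₀ hcc0, one_smul, hedef]
          abel
        rw [hv, pp_neg hbdd', pp_smul hbdd', norm_inv, hccabs, inv_one, one_mul]
        exact hβ2
      -- Step 4 : roots of unity and approximate eigenvectors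
      obtain ⟨ξ, hξ⟩ := IsAlgClosed.exists_pow_nat_eq e (n := m) (by omega)
      have hξabs : ‖ξ‖ = 1 := by
        have h1 : ‖ξ‖ ^ m = 1 := by rw [← norm_pow, hξ, heabs]
        rcases lt_trichotomy ‖ξ‖ 1 with h | h | h
        · exfalso
          have := pow_lt_one₀ (norm_nonneg ξ) h (by omega : m ≠ 0)
          rw [h1] at this; exact lt_irrefl _ this
        · exact h
        · exfalso
          have := one_lt_pow₀ h (by omega : m ≠ 0)
          rw [h1] at this; exact lt_irrefl _ this
      set ζ : ℂ := Complex.exp (2 * Real.pi * Complex.I / m) with hζdef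
      have hprim : IsPrimitiveRoot ζ m := Complex.isPrimitiveRoot_exp m (by omega)
      have hζm : ζ ^ m = 1 := hprim.pow_eq_one
      have hζabs : ‖ζ‖ = 1 := by
        have h1 : ‖ζ‖ ^ m = 1 := by rw [← norm_pow, hζm, norm_one]
        rcases lt_trichotomy ‖ζ‖ 1 with h | h | h
        · exfalso
          have := pow_lt_one₀ (norm_nonneg ζ) h (by omega : m ≠ 0)
          rw [h1] at this; exact lt_irrefl _ this
        · exact h
        · exfalso
          have := one_lt_pow₀ h (by omega : m ≠ 0)
          rw [h1] at this; exact lt_irrefl _ this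
      set μf : ℕ → ℂ := fun j => ξ * ζ ^ j with hμfdef
      have hμabs : ∀ j, ‖μf j‖ = 1 := by
        intro j
        simp only [hμfdef]
        rw [norm_mul, norm_pow, hξabs, hζabs, one_pow, mul_one]
      have hμm : ∀ j, (μf j) ^ m = e := by
        intro j
        simp only [hμfdef]
        rw [mul_pow, hξ, pow_right_comm, hζm, one_pow, mul_one]
      set v : ℕ → X := fun j => ∑ k ∈ Finset.range m, (μf j) ^ (m - (k+1)) • (T ^ k) y₀
        with hvdef
      have hvid : ∀ j, T (v j) - (μf j) • v j = (T ^ m) y₀ - e • y₀ := by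
        intro j
        set g : ℕ → X := fun k => (μf j) ^ (m - k) • (T ^ k) y₀ with hgdef
        have h1 : T (v j) = ∑ k ∈ Finset.range m, g (k + 1) := by
          simp only [hvdef]
          rw [map_sum]
          refine Finset.sum_congr rfl (fun k hk => ?_)
          rw [map_smul]
          simp only [hgdef]
          congr 1
          rw [pow_succ']
          rfl
        have h2 : (μf j) • v j = ∑ k ∈ Finset.range m, g k := by
          simp only [hvdef]
          rw [Finset.smul_sum]
          refine Finset.sum_congr rfl (fun k hk => ?_)
          rw [smul_smul]
          simp only [hgdef]
          have hk' : k < m := Finset.mem_range.mp hk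
          have hmk : m - k = (m - (k+1)) + 1 := by omega
          rw [hmk, pow_succ']
        have hgm : g m = (T ^ m) y₀ := by
          simp only [hgdef]
          rw [Nat.sub_self, pow_zero, one_smul]
        have hg0 : g 0 = e • y₀ := by
          simp only [hgdef]
          rw [Nat.sub_zero, hμm j, pow_zero]
          congr 1
        rw [h1, h2, ← Finset.sum_sub_distrib, Finset.sum_range_sub g m, hgm, hg0]
      have hsumv : ∑ j ∈ Finset.range m, v j = (m : ℂ) • (T ^ (m-1)) y₀ := by
        simp only [hvdef]
        rw [Finset.sum_comm]
        have hterm : ∀ k ∈ Finset.range m,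
            (∑ j ∈ Finset.range m, (μf j) ^ (m - (k+1)) • (T ^ k) y₀)
            = (∑ j ∈ Finset.range m, (μf j) ^ (m - (k+1))) • (T ^ k) y₀ :=
          fun k _ => (Finset.sum_smul).symm
        rw [Finset.sum_congr rfl hterm]
        have hcoef : ∀ k ∈ Finset.range m, k ≠ m - 1 →
            (∑ j ∈ Finset.range m, (μf j) ^ (m - (k+1))) • (T ^ k) y₀ = 0 := by
          intro k hk hkne
          have hklt : k < m := Finset.mem_range.mp hk
          have hs0 : 0 < m - (k + 1) := by omega
          have hsm : m - (k + 1) < m := by omega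
          have hzs : ζ ^ (m - (k+1)) ≠ 1 := hprim.pow_ne_one_of_pos_of_lt hs0.ne' hsm
          have hsum0 : (∑ j ∈ Finset.range m, (μf j) ^ (m - (k+1))) = 0 := by
            have hterm2 : ∀ j, (μf j) ^ (m - (k+1)) = ξ ^ (m - (k+1)) * (ζ ^ (m - (k+1))) ^ j := by
              intro j
              simp only [hμfdef]
              rw [mul_pow, pow_right_comm]
            rw [Finset.sum_congr rfl (fun j _ => hterm2 j), ← Finset.mul_sum,
              geom_sum_eq hzs m]
            have hnum : (ζ ^ (m - (k+1))) ^ m = 1 := by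
              rw [pow_right_comm, hζm, one_pow]
            rw [hnum, sub_self, zero_div, mul_zero]
          rw [hsum0, zero_smul]
        rw [Finset.sum_eq_single (m-1) hcoef
          (fun h => absurd (Finset.mem_range.mpr (by omega : m - 1 < m)) h)]
        have hexp : m - ((m-1)+1) = 0 := by omega
        rw [hexp]
        simp only [pow_zero]
        rw [Finset.sum_const, Finset.card_range, nsmul_eq_mul, mul_one]
      -- Step 5 : pick j with large pp (v j)
      have hexj : ∃ j ∈ Finset.range m, r ≤ pp Tn (v j) := by
        by_contra h
        push_neg at h
        have hlt : ∑ j ∈ Finset.range m, pp Tn (v j) < ∑ _j ∈ Finset.range m, r :=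
          Finset.sum_lt_sum_of_nonempty ⟨0, Finset.mem_range.mpr (by omega)⟩ h
        rw [Finset.sum_const, Finset.card_range, nsmul_eq_mul] at hlt
        have hge := pp_sum_le hbdd' (Finset.range m) v
        have hmv : pp Tn ((m:ℂ) • (T ^ (m-1)) y₀) = (m:ℝ) * r := by
          rw [pp_smul hbdd', pp_pow_eq hbdd' hcomm hreg', ← hrdef, Complex.norm_natCast]
        rw [hsumv, hmv] at hge
        linarith
      obtain ⟨j, hjm, hjr⟩ := hexj
      -- Step 6 : transfer the approximate eigenvector relation to y₀ and contradict
      obtain ⟨c₂, k, hwk⟩ := hdens (v j) (δ / (16 * C')) hη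
      have hθ : pp Tn (v j - c₂ • (T ^ k) y₀) ≤ δ / 16 := by
        refine (pp_le_norm hbdd' _).trans ?_
        have := mul_le_mul_of_nonneg_left hwk.le hC'.le
        rwa [hCfact] at this
      have hkey : T (v j) - (μf j) • v j
          = c₂ • ((T ^ k) (T y₀ - (μf j) • y₀))
            + (T (v j - c₂ • (T ^ k) y₀) - (μf j) • (v j - c₂ • (T ^ k) y₀)) := by
        have e1 : (T ^ k) (T y₀) = T ((T ^ k) y₀) := by
          rw [show (T ^ k) (T y₀) = (T ^ k * T) y₀ from rfl, ← pow_succ, pow_succ']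
          rfl
        rw [map_sub (T ^ k), map_smul (T ^ k), e1, map_sub T, map_smul T, smul_sub, smul_sub,
          smul_smul c₂ (μf j), smul_smul (μf j) c₂, mul_comm c₂ (μf j)]
        abel
      have hest1 : pp Tn (c₂ • ((T ^ k) (T y₀ - (μf j) • y₀)))
          = ‖c₂‖ * pp Tn (T y₀ - (μf j) • y₀) := by
        rw [pp_smul hbdd', pp_pow_eq hbdd' hcomm hreg']
      have hest2 : pp Tn (T (v j - c₂ • (T ^ k) y₀)) ≤ δ / 16 := by
        rw [pp_T_eq hbdd' hcomm hreg']
        exact hθ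
      have hest3 : pp Tn ((μf j) • (v j - c₂ • (T ^ k) y₀)) ≤ δ / 16 := by
        rw [pp_smul hbdd', hμabs j, one_mul]
        exact hθ
      have hTv : pp Tn (T (v j) - (μf j) • v j) ≤ δ / 8 := by
        rw [hvid j]
        exact hee
      have hsplit2 : c₂ • ((T ^ k) (T y₀ - (μf j) • y₀))
          = (T (v j) - (μf j) • v j)
            - (T (v j - c₂ • (T ^ k) y₀) - (μf j) • (v j - c₂ • (T ^ k) y₀)) := by
        rw [hkey]
        abel
      have hub : ‖c₂‖ * pp Tn (T y₀ - (μf j) • y₀) ≤ δ / 8 + (δ / 16 + δ / 16) := by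
        rw [← hest1, hsplit2]
        have h1 := pp_sub_le hbdd' (T (v j) - (μf j) • v j)
          (T (v j - c₂ • (T ^ k) y₀) - (μf j) • (v j - c₂ • (T ^ k) y₀))
        have h2 := pp_sub_le hbdd' (T (v j - c₂ • (T ^ k) y₀))
          ((μf j) • (v j - c₂ • (T ^ k) y₀))
        linarith
      have hc₂ : (15/16 : ℝ) * r ≤ ‖c₂‖ * r := by
        have h1 : pp Tn (c₂ • (T ^ k) y₀) = ‖c₂‖ * r := by
          rw [pp_smul hbdd', pp_pow_eq hbdd' hcomm hreg', ← hrdef]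
        have h3 : pp Tn (v j) - pp Tn (v j - c₂ • (T ^ k) y₀) ≤ pp Tn (c₂ • (T ^ k) y₀) := by
          have h4 := pp_sub_pp_le hbdd' (v j) (v j - c₂ • (T ^ k) y₀)
          rw [show v j - (v j - c₂ • (T ^ k) y₀) = c₂ • (T ^ k) y₀ by abel] at h4
          exact h4
        rw [h1] at h3
        linarith
      have h15 : (15/16 : ℝ) ≤ ‖c₂‖ := by nlinarith
      have hfinal := hB (μf j)
      have hcontr : (15/16 : ℝ) * ε₀ ≤ δ / 4 := by
        have h1 : (15/16:ℝ) * ε₀ ≤ ‖c₂‖ * ε₀ := mul_le_mul_of_nonneg_right h15 hε₀.le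
        have h2 : ‖c₂‖ * ε₀ ≤ ‖c₂‖ * pp Tn (T y₀ - (μf j) • y₀) :=
          mul_le_mul_of_nonneg_left hfinal (norm_nonneg c₂)
        linarith
      linarith
  -- conclusion : pp vanishes everywhere and Tn n x → 0
  intro x
  have hx0 : pp Tn x = 0 := by
    have hle : pp Tn x ≤ 0 := by
      refine le_of_forall_pos_le_add (fun ε hε => ?_)
      obtain ⟨c, n, hcn⟩ := hdens x (ε / (2 * C')) (by positivity)
      have h1 : pp Tn (x - c • (T ^ n) y₀) ≤ C' * (ε / (2 * C')) :=
        (pp_le_norm hbdd' _).trans (mul_le_mul_of_nonneg_left hcn.le hC'.le)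
      have h2 : pp Tn (c • (T ^ n) y₀) = 0 := by
        rw [pp_smul hbdd', pp_pow_eq hbdd' hcomm hreg', hppy, mul_zero]
      have h5 := pp_add_le hbdd' (x - c • (T ^ n) y₀) (c • (T ^ n) y₀)
      rw [show (x - c • (T ^ n) y₀) + c • (T ^ n) y₀ = x by abel, h2] at h5
      have hCε : C' * (ε / (2 * C')) = ε / 2 := by
        field_simp
      rw [hCε] at h1
      linarith
    exact le_antisymm hle (pp_nonneg hbdd' x)
  refine tendsto_zero_iff_norm_tendsto_zero.mpr ?_
  refine Metric.tendsto_atTop.mpr (fun ε hε => ?_)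
  have hev := eventually_le_pp hbdd' x (half_pos hε)
  rw [hx0, zero_add] at hev
  obtain ⟨N, hN⟩ := eventually_atTop.mp hev
  refine ⟨N, fun n hn => ?_⟩
  rw [Real.dist_eq, sub_zero, abs_of_nonneg (norm_nonneg _)]
  have := hN n hn
  linarith
end

section
/- Let T ∈ B(X) be supercyclic and let {T_n} be a sequence in κ(T) with sup_n ‖T_n‖ < ∞ which is (n₀,0)-regular for some nonnegative integer n₀. Suppose μ ∈ ℂ with |μ| = 1 is an eigenvalue of the adjoint T*. Then the following are equivalent: (a) there exists y ∈ X not in the closure of the range of (T − μI) such that (T_n y) converges in norm to a nonzero limit; (b) X_0 ≠ X and X_c = X; (c) 1 is an eigenvalue of T and 1 is an eigenvalue of T*. -/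
open Filter Topology

set_option maxHeartbeats 1000000

section Aux

variable {X : Type*} [NormedAddCommGroup X] [NormedSpace ℂ X]

lemma pow_fixed {T : X →L[ℂ] X} {u : X} (hu : T u = u) : ∀ j, (T ^ j) u = u := by
  intro j
  induction j with
  | zero => simp
  | succ j ih => rw [pow_succ, ContinuousLinearMap.mul_apply, hu, ih]

lemma kappa_comm_apply {T S : X →L[ℂ] X} (h : InKappa T S) (v : X) : T (S v) = S (T v) := by
  obtain ⟨t, ht0, ht1, hts⟩ := h
  have h1 : HasSum (fun j => t j • T ^ (j + 1)) (T * S) := by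
    have := hts.mul_left T
    simpa [mul_smul_comm, pow_succ'] using this
  have h2 : HasSum (fun j => t j • T ^ (j + 1)) (S * T) := by
    have := hts.mul_right T
    simpa [smul_mul_assoc, pow_succ] using this
  have hTS : T * S = S * T := h1.unique h2
  have := congrArg (fun (A : X →L[ℂ] X) => A v) hTS
  simpa [ContinuousLinearMap.mul_apply] using this

lemma kappa_pow_comm_apply {T S : X →L[ℂ] X} (h : InKappa T S) (n : ℕ) (v : X) :
    (T ^ n) (S v) = S ((T ^ n) v) := by
  induction n with
  | zero => simp
  | succ n ih =>
    rw [pow_succ', ContinuousLinearMap.mul_apply, ContinuousLinearMap.mul_apply, ih,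
      kappa_comm_apply h]

lemma kappa_fixed {T S : X →L[ℂ] X} (h : InKappa T S) {u : X} (hu : T u = u) : S u = u := by
  obtain ⟨t, ht0, ht1, hts⟩ := h
  have hlip : LipschitzWith ‖u‖₊ (fun A : X →L[ℂ] X => A u) := by
    apply LipschitzWith.of_dist_le_mul
    intro A B
    rw [dist_eq_norm, dist_eq_norm, ← ContinuousLinearMap.sub_apply]
    calc ‖(A - B) u‖ ≤ ‖A - B‖ * ‖u‖ := (A - B).le_opNorm u
      _ = ‖u‖₊ * ‖A - B‖ := by rw [coe_nnnorm]; ring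
  have h1 : HasSum (fun j => (t j • T ^ j) u) (S u) :=
    hts.map (AddMonoidHom.mk' (fun A : X →L[ℂ] X => A u)
      (fun A B => ContinuousLinearMap.add_apply A B u)) hlip.continuous
  have h2 : HasSum (fun j => t j • u) (S u) := by
    simpa [ContinuousLinearMap.smul_apply, pow_fixed hu] using h1
  have h3 : HasSum (fun j => t j • u) ((1 : ℝ) • u) := ht1.smul_const u
  have := h2.unique h3
  simpa using this

lemma ev_norm_le {F : ℕ → X} (h : Tendsto F atTop (𝓝 0)) {ε : ℝ} (hε : 0 < ε) :
    ∃ N, ∀ m ≥ N, ‖F m‖ ≤ ε := by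
  have := Metric.tendsto_atTop.mp h ε hε
  obtain ⟨N, hN⟩ := this
  exact ⟨N, fun m hm => by
    have := hN m hm
    rw [dist_eq_norm, sub_zero] at this
    exact this.le⟩

lemma iter_reg {T : X →L[ℂ] X} {Tn : ℕ → X →L[ℂ] X} {n₀ : ℕ}
    (hreg : RegularSeq T Tn n₀ 0) :
    ∀ (j : ℕ) (x : X),
      Tendsto (fun m => (T ^ j) (Tn m x) - Tn (m + j * n₀) x) atTop (𝓝 0) := by
  have h0 : ∀ x : X, Tendsto (fun m => T (Tn m x) - Tn (m + n₀) x) atTop (𝓝 0) := by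
    intro x
    rw [tendsto_zero_iff_norm_tendsto_zero]
    exact hreg x ⟨x, by simp⟩
  intro j
  induction j with
  | zero =>
    intro x
    simp only [pow_zero, ContinuousLinearMap.one_apply, Nat.zero_mul, Nat.add_zero, sub_self]
    exact tendsto_const_nhds
  | succ j ih =>
    intro x
    have h1 : Tendsto (fun m => T ((T ^ j) (Tn m x) - Tn (m + j * n₀) x)) atTop (𝓝 0) := by
      have h := (T.continuous.tendsto 0).comp (ih x)
      rw [map_zero] at h
      exact h
    have h2 : Tendsto (fun m => T (Tn (m + j * n₀) x) - Tn (m + j * n₀ + n₀) x) atTop (𝓝 0) := by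
      have := (h0 x).comp (tendsto_add_atTop_nat (j * n₀))
      exact this
    have h3 := h1.add h2
    rw [add_zero] at h3
    refine h3.congr (fun m => ?_)
    have hi : m + (j + 1) * n₀ = m + j * n₀ + n₀ := by ring
    rw [hi, map_sub, pow_succ', ContinuousLinearMap.mul_apply]
    abel

lemma lemA [CompleteSpace X]
    (T : X →L[ℂ] X) (x₀ : X)
    (hd : Dense {y : X | ∃ (c : ℂ) (n : ℕ), y = c • (T ^ n) x₀})
    (Tn : ℕ → X →L[ℂ] X) (hκ : ∀ n, InKappa T (Tn n))
    (C : ℝ) (hbdd : ∀ n, ‖Tn n‖ ≤ C)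
    (n₀ : ℕ) (hreg : RegularSeq T Tn n₀ 0)
    (y z : X) (hz : z ≠ 0) (hyz : Tendsto (fun n => Tn n y) atTop (𝓝 z)) :
    {x : X | Tendsto (fun n => ‖Tn n x‖) atTop (𝓝 0)} ≠ Set.univ ∧
      {x : X | ∃ w : X, Tendsto (fun n => Tn n x) atTop (𝓝 w)} = Set.univ := by
  have hC0 : 0 ≤ C := le_trans (norm_nonneg _) (hbdd 0)
  have hTb : ∀ (m : ℕ) (v : X), ‖Tn m v‖ ≤ C * ‖v‖ := fun m v =>
    ((Tn m).le_opNorm v).trans (mul_le_mul_of_nonneg_right (hbdd m) (norm_nonneg v))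
  set B : ℝ := C * ‖x₀‖ with hB
  have hB0 : 0 ≤ B := mul_nonneg hC0 (norm_nonneg _)
  have hzpos : 0 < ‖z‖ := norm_pos_iff.mpr hz
  set u : ℕ → X := fun m => Tn m x₀ with hu
  have hub : ∀ m, ‖u m‖ ≤ B := fun m => hTb m x₀
  have key : ∀ ε : ℝ, 0 < ε → ∃ (ζ : X) (N : ℕ), ∀ m ≥ N, ‖u m - ζ‖ ≤ ε := by
    intro ε hε
    set ε₁ : ℝ := min 1 (min (‖z‖ / (2 * (C + 1)))
      (min (ε / 2) (ε * ‖z‖ / (4 * (B + 1) * (C + 1))))) with hε₁def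
    have hε₁ : 0 < ε₁ := by
      apply lt_min one_pos
      apply lt_min (by positivity)
      exact lt_min (by positivity) (by positivity)
    have hε₁1 : ε₁ ≤ 1 := min_le_left _ _
    have hε₁a : ε₁ ≤ ‖z‖ / (2 * (C + 1)) := le_trans (min_le_right _ _) (min_le_left _ _)
    have hε₁b : ε₁ ≤ ε / 2 :=
      le_trans (min_le_right _ _) (le_trans (min_le_right _ _) (min_le_left _ _))
    have hε₁c : ε₁ ≤ ε * ‖z‖ / (4 * (B + 1) * (C + 1)) :=
      le_trans (min_le_right _ _) (le_trans (min_le_right _ _) (min_le_right _ _))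
    obtain ⟨w, hw, hwd⟩ := hd.exists_dist_lt y hε₁
    obtain ⟨c, n, rfl⟩ := hw
    have hwy : ‖c • (T ^ n) x₀ - y‖ ≤ ε₁ := by
      rw [norm_sub_rev, ← dist_eq_norm]
      exact hwd.le
    have step2 : ∀ m, ‖c • (T ^ n) (u m) - Tn m y‖ ≤ C * ε₁ := by
      intro m
      have he : Tn m (c • (T ^ n) x₀ - y) = c • (T ^ n) (u m) - Tn m y := by
        rw [map_sub, map_smul, ← kappa_pow_comm_apply (hκ m) n x₀]
      rw [← he]
      exact (hTb m _).trans (mul_le_mul_of_nonneg_left hwy hC0)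
    obtain ⟨N₁, hN₁⟩ : ∃ N₁, ∀ m ≥ N₁, ‖Tn m y - z‖ ≤ ε₁ := by
      refine ev_norm_le ?_ hε₁
      simpa using hyz.sub (tendsto_const_nhds (x := z))
    obtain ⟨N₂, hN₂⟩ := ev_norm_le (iter_reg hreg n x₀) hε₁
    set N₃ := max N₁ N₂ with hN₃
    have h5 : ∀ m ≥ N₃, ‖c • u (m + n * n₀) - z‖ ≤ (C + 1) * ε₁ + ‖c‖ * ε₁ := by
      intro m hm
      have t1 : ‖c • u (m + n * n₀) - c • (T ^ n) (u m)‖ ≤ ‖c‖ * ε₁ := by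
        rw [← smul_sub, norm_smul]
        refine mul_le_mul_of_nonneg_left ?_ (norm_nonneg c)
        rw [norm_sub_rev]
        exact hN₂ m (le_trans (le_max_right _ _) hm)
      have t2 : ‖c • (T ^ n) (u m) - Tn m y‖ ≤ C * ε₁ := step2 m
      have t3 : ‖Tn m y - z‖ ≤ ε₁ := hN₁ m (le_trans (le_max_left _ _) hm)
      calc ‖c • u (m + n * n₀) - z‖
          ≤ ‖c • u (m + n * n₀) - c • (T ^ n) (u m)‖ + ‖c • (T ^ n) (u m) - z‖ :=
            norm_sub_le_norm_sub_add_norm_sub _ _ _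
        _ ≤ ‖c‖ * ε₁ + (‖c • (T ^ n) (u m) - Tn m y‖ + ‖Tn m y - z‖) := by
            refine add_le_add t1 (norm_sub_le_norm_sub_add_norm_sub _ _ _)
        _ ≤ ‖c‖ * ε₁ + (C * ε₁ + ε₁) := by nlinarith
        _ = (C + 1) * ε₁ + ‖c‖ * ε₁ := by ring
    have hCe : (C + 1) * ε₁ ≤ ‖z‖ / 2 := by
      rw [le_div_iff₀ (by positivity)] at hε₁a
      nlinarith
    have hclow : ‖z‖ / (2 * (B + 1)) ≤ ‖c‖ := by
      have h5' := h5 N₃ (le_refl _)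
      have hzle : ‖z‖ ≤ ‖c‖ * B + ((C + 1) * ε₁ + ‖c‖ * ε₁) := by
        have hzz : z = c • u (N₃ + n * n₀) + (z - c • u (N₃ + n * n₀)) := by abel
        have : ‖z‖ ≤ ‖c • u (N₃ + n * n₀)‖ + ‖c • u (N₃ + n * n₀) - z‖ := by
          calc ‖z‖ = ‖c • u (N₃ + n * n₀) + (z - c • u (N₃ + n * n₀))‖ := by rw [← hzz]
            _ ≤ ‖c • u (N₃ + n * n₀)‖ + ‖z - c • u (N₃ + n * n₀)‖ := norm_add_le _ _
            _ = ‖c • u (N₃ + n * n₀)‖ + ‖c • u (N₃ + n * n₀) - z‖ := by rw [norm_sub_rev]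
        calc ‖z‖ ≤ ‖c • u (N₃ + n * n₀)‖ + ‖c • u (N₃ + n * n₀) - z‖ := this
          _ ≤ ‖c‖ * B + ((C + 1) * ε₁ + ‖c‖ * ε₁) := by
            refine add_le_add ?_ h5'
            rw [norm_smul]
            exact mul_le_mul_of_nonneg_left (hub _) (norm_nonneg c)
      rw [div_le_iff₀ (by positivity)]
      nlinarith [norm_nonneg c]
    have hc0 : c ≠ 0 := by
      intro h
      rw [h, norm_zero] at hclow
      have : 0 < ‖z‖ / (2 * (B + 1)) := by positivity
      linarith
    have hcpos : 0 < ‖c‖ := norm_pos_iff.mpr hc0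
    refine ⟨c⁻¹ • z, N₃ + n * n₀, fun m hm => ?_⟩
    have hm2 : m - n * n₀ ≥ N₃ := by omega
    have hm3 : (m - n * n₀) + n * n₀ = m := by omega
    have h6 := h5 (m - n * n₀) hm2
    rw [hm3] at h6
    have he : u m - c⁻¹ • z = c⁻¹ • (c • u m - z) := by
      rw [smul_sub, smul_smul, inv_mul_cancel₀ hc0, one_smul]
    rw [he, norm_smul, norm_inv]
    have hinv : ‖c‖⁻¹ ≤ 2 * (B + 1) / ‖z‖ := by
      have h := inv_anti₀ (show (0:ℝ) < ‖z‖ / (2 * (B + 1)) by positivity) hclow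
      rwa [inv_div] at h
    calc ‖c‖⁻¹ * ‖c • u m - z‖ ≤ ‖c‖⁻¹ * ((C + 1) * ε₁ + ‖c‖ * ε₁) := by
          exact mul_le_mul_of_nonneg_left h6 (by positivity)
      _ = ‖c‖⁻¹ * ((C + 1) * ε₁) + ε₁ := by
          rw [mul_add, inv_mul_cancel_left₀ (ne_of_gt hcpos)]
      _ ≤ (2 * (B + 1) / ‖z‖) * ((C + 1) * ε₁) + ε / 2 := by
          refine add_le_add (mul_le_mul_of_nonneg_right hinv (by positivity)) hε₁b
      _ ≤ ε / 2 + ε / 2 := by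
          refine add_le_add ?_ le_rfl
          have h1 : ε₁ * (4 * (B + 1) * (C + 1)) ≤ ε * ‖z‖ := by
            rwa [le_div_iff₀ (by positivity)] at hε₁c
          rw [div_mul_eq_mul_div, div_le_iff₀ hzpos]
          nlinarith
      _ = ε := by ring
  have hcau : CauchySeq u := by
    rw [Metric.cauchySeq_iff']
    intro ε hε
    obtain ⟨ζ, N, hN⟩ := key (ε / 3) (by positivity)
    refine ⟨N, fun m hm => ?_⟩
    have h1 := hN m hm
    have h2 := hN N (le_refl N)
    calc dist (u m) (u N) ≤ dist (u m) ζ + dist ζ (u N) := dist_triangle _ _ _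
      _ ≤ ε / 3 + ε / 3 := by
          rw [dist_eq_norm, dist_eq_norm]
          exact add_le_add h1 (by rw [norm_sub_rev]; exact h2)
      _ < ε := by linarith
  constructor
  · intro hset
    have hy0 : Tendsto (fun m => ‖Tn m y‖) atTop (𝓝 0) := Set.eq_univ_iff_forall.mp hset y
    have h0z : (0 : ℝ) = ‖z‖ := tendsto_nhds_unique hy0 hyz.norm
    exact hz (norm_eq_zero.mp h0z.symm)
  · refine Set.eq_univ_iff_forall.mpr fun v => ?_
    refine cauchySeq_tendsto_of_complete ?_
    rw [Metric.cauchySeq_iff']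
    intro ε hε
    set ε₂ : ℝ := ε / (4 * (C + 1)) with hε₂def
    have hε₂ : 0 < ε₂ := by positivity
    obtain ⟨w, hw, hwd⟩ := hd.exists_dist_lt v hε₂
    obtain ⟨c, n, rfl⟩ := hw
    have hwv : ‖v - c • (T ^ n) x₀‖ ≤ ε₂ := by
      rw [← dist_eq_norm]
      exact hwd.le
    set K : ℝ := ‖c‖ * ‖T ^ n‖ + 1 with hK
    have hKpos : 0 < K := by positivity
    obtain ⟨N, hN⟩ := Metric.cauchySeq_iff'.mp hcau (ε / (4 * K)) (by positivity)
    refine ⟨N, fun m hm => ?_⟩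
    have hident : ∀ k, Tn k v - Tn k (c • (T ^ n) x₀) = Tn k (v - c • (T ^ n) x₀) := by
      intro k; rw [map_sub]
    have hTnw : ∀ k, Tn k (c • (T ^ n) x₀) = c • (T ^ n) (u k) := by
      intro k
      rw [map_smul, ← kappa_pow_comm_apply (hκ k) n x₀]
    have hdiff : ‖c • (T ^ n) (u m) - c • (T ^ n) (u N)‖ ≤ K * (ε / (4 * K)) := by
      rw [← smul_sub, ← map_sub, norm_smul]
      have h1 : ‖(T ^ n) (u m - u N)‖ ≤ ‖T ^ n‖ * ‖u m - u N‖ := (T ^ n).le_opNorm _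
      have h2 : ‖u m - u N‖ ≤ ε / (4 * K) := by
        rw [← dist_eq_norm]
        exact (hN m hm).le
      calc ‖c‖ * ‖(T ^ n) (u m - u N)‖ ≤ ‖c‖ * (‖T ^ n‖ * ‖u m - u N‖) :=
            mul_le_mul_of_nonneg_left h1 (norm_nonneg c)
        _ ≤ ‖c‖ * (‖T ^ n‖ * (ε / (4 * K))) := by
            refine mul_le_mul_of_nonneg_left (mul_le_mul_of_nonneg_left h2 (norm_nonneg _))
              (norm_nonneg c)
        _ ≤ K * (ε / (4 * K)) := by
            rw [← mul_assoc]
            refine mul_le_mul_of_nonneg_right ?_ (by positivity)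
            rw [hK]; nlinarith [norm_nonneg c, norm_nonneg (T ^ n),
              mul_nonneg (norm_nonneg c) (norm_nonneg (T ^ n))]
    rw [dist_eq_norm]
    have e1 : Tn m v - Tn N v =
        Tn m (v - c • (T ^ n) x₀) + (c • (T ^ n) (u m) - c • (T ^ n) (u N))
          + Tn N (c • (T ^ n) x₀ - v) := by
      rw [map_sub, map_sub, hTnw m, hTnw N]
      abel
    rw [e1]
    have b1 : ‖Tn m (v - c • (T ^ n) x₀)‖ ≤ C * ε₂ :=
      (hTb m _).trans (mul_le_mul_of_nonneg_left hwv hC0)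
    have b3 : ‖Tn N (c • (T ^ n) x₀ - v)‖ ≤ C * ε₂ := by
      refine (hTb N _).trans (mul_le_mul_of_nonneg_left ?_ hC0)
      rw [norm_sub_rev]; exact hwv
    have hKK : K * (ε / (4 * K)) = ε / 4 := by
      field_simp
    calc ‖Tn m (v - c • (T ^ n) x₀) + (c • (T ^ n) (u m) - c • (T ^ n) (u N))
          + Tn N (c • (T ^ n) x₀ - v)‖
        ≤ ‖Tn m (v - c • (T ^ n) x₀) + (c • (T ^ n) (u m) - c • (T ^ n) (u N))‖
          + ‖Tn N (c • (T ^ n) x₀ - v)‖ := norm_add_le _ _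
      _ ≤ (‖Tn m (v - c • (T ^ n) x₀)‖ + ‖c • (T ^ n) (u m) - c • (T ^ n) (u N)‖)
          + ‖Tn N (c • (T ^ n) x₀ - v)‖ := by
            exact add_le_add (norm_add_le _ _) le_rfl
      _ ≤ (C * ε₂ + K * (ε / (4 * K))) + C * ε₂ := by
            exact add_le_add (add_le_add b1 hdiff) b3
      _ < ε := by
            rw [hKK]
            have h2 : C * ε₂ < ε / 4 := by
              rw [hε₂def, mul_div_assoc']
              rw [div_lt_div_iff₀ (by positivity) (by positivity)]
              nlinarith
            linarith

lemma lemB (T : X →L[ℂ] X)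
    (Tn : ℕ → X →L[ℂ] X) (hκ : ∀ n, InKappa T (Tn n))
    (C : ℝ) (hbdd : ∀ n, ‖Tn n‖ ≤ C)
    (n₀ : ℕ) (hreg : RegularSeq T Tn n₀ 0)
    (h0 : {x : X | Tendsto (fun n => ‖Tn n x‖) atTop (𝓝 0)} ≠ Set.univ)
    (hc : {x : X | ∃ z : X, Tendsto (fun n => Tn n x) atTop (𝓝 z)} = Set.univ) :
    ((∃ x : X, x ≠ 0 ∧ T x = x) ∧
      ∃ g : X →L[ℂ] ℂ, g ≠ 0 ∧ ∀ x : X, g (T x) = g x) := by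
  have hC0 : 0 ≤ C := le_trans (norm_nonneg _) (hbdd 0)
  have hTb : ∀ (m : ℕ) (v : X), ‖Tn m v‖ ≤ C * ‖v‖ := fun m v =>
    ((Tn m).le_opNorm v).trans (mul_le_mul_of_nonneg_right (hbdd m) (norm_nonneg v))
  have hlim : ∀ x : X, ∃ z : X, Tendsto (fun n => Tn n x) atTop (𝓝 z) :=
    Set.eq_univ_iff_forall.mp hc
  choose φ hφ using hlim
  have hreg0 : ∀ x : X, Tendsto (fun m => T (Tn m x) - Tn (m + n₀) x) atTop (𝓝 0) := by
    intro x
    rw [tendsto_zero_iff_norm_tendsto_zero]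
    exact hreg x ⟨x, by simp⟩
  have hshift : ∀ x : X, Tendsto (fun m => Tn (m + n₀) x) atTop (𝓝 (φ x)) := by
    intro x
    exact (hφ x).comp (tendsto_add_atTop_nat n₀)
  have hTlim : ∀ x : X, Tendsto (fun m => T (Tn m x)) atTop (𝓝 (φ x)) := by
    intro x
    have h := (hreg0 x).add (hshift x)
    rw [zero_add] at h
    refine h.congr (fun m => ?_)
    abel
  have hfixφ : ∀ x : X, T (φ x) = φ x := by
    intro x
    have h1 : Tendsto (fun m => T (Tn m x)) atTop (𝓝 (T (φ x))) :=
      (T.continuous.tendsto (φ x)).comp (hφ x)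
    exact tendsto_nhds_unique h1 (hTlim x)
  have hφT : ∀ x : X, φ (T x) = φ x := by
    intro x
    have h1 : Tendsto (fun m => Tn m (T x)) atTop (𝓝 (φ x)) := by
      refine (hTlim x).congr (fun m => ?_)
      exact kappa_comm_apply (hκ m) x
    exact tendsto_nhds_unique (hφ (T x)) h1
  have hadd : ∀ x y : X, φ (x + y) = φ x + φ y := by
    intro x y
    have h1 : Tendsto (fun m => Tn m (x + y)) atTop (𝓝 (φ x + φ y)) := by
      have := (hφ x).add (hφ y)
      refine this.congr (fun m => ?_)
      rw [map_add]
    exact tendsto_nhds_unique (hφ (x + y)) h1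
  have hsmul : ∀ (a : ℂ) (x : X), φ (a • x) = a • φ x := by
    intro a x
    have h1 : Tendsto (fun m => Tn m (a • x)) atTop (𝓝 (a • φ x)) := by
      have := (hφ x).const_smul a
      refine this.congr (fun m => ?_)
      rw [map_smul]
    exact tendsto_nhds_unique (hφ (a • x)) h1
  have hbound : ∀ x : X, ‖φ x‖ ≤ C * ‖x‖ := by
    intro x
    refine le_of_tendsto (hφ x).norm ?_
    exact Filter.Eventually.of_forall (fun m => hTb m x)
  set E : X →L[ℂ] X := LinearMap.mkContinuous
    { toFun := φ, map_add' := hadd, map_smul' := hsmul } C hbound with hE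
  have hEapp : ∀ x, E x = φ x := fun x => rfl
  obtain ⟨xb, hxb⟩ := (Set.ne_univ_iff_exists_notMem _).mp h0
  have hw0 : φ xb ≠ 0 := by
    intro h
    apply hxb
    have := (hφ xb).norm
    rw [h, norm_zero] at this
    exact this
  obtain ⟨h, hh1, hh2⟩ := exists_dual_vector ℂ (φ xb) (norm_ne_zero_iff.mpr hw0)
  refine ⟨⟨φ xb, hw0, hfixφ xb⟩, h.comp E, ?_, ?_⟩
  · intro hg
    have h1 : h (E xb) = 0 := by
      have := congrArg (fun (A : X →L[ℂ] ℂ) => A xb) hg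
      simpa using this
    rw [hEapp, hh2] at h1
    have : φ xb = 0 := by
      rwa [RCLike.ofReal_eq_zero, norm_eq_zero] at h1
    exact hw0 this
  · intro x
    have : E (T x) = E x := by
      rw [hEapp, hEapp, hφT]
    simp [ContinuousLinearMap.comp_apply, this]

lemma eig_pow {T : X →L[ℂ] X} {f : X →L[ℂ] ℂ} {μ : ℂ} (hfeig : ∀ x : X, f (T x) = μ * f x) :
    ∀ (j : ℕ) (x : X), f ((T ^ j) x) = μ ^ j * f x := by
  intro j
  induction j with
  | zero => intro x; simp
  | succ j ih =>
    intro x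
    rw [pow_succ, ContinuousLinearMap.mul_apply, ih, hfeig, pow_succ]
    ring

lemma lemC (T : X →L[ℂ] X) (x₀ : X)
    (hd : Dense {y : X | ∃ (c : ℂ) (n : ℕ), y = c • (T ^ n) x₀})
    (Tn : ℕ → X →L[ℂ] X) (hκ : ∀ n, InKappa T (Tn n))
    (C : ℝ) (hbdd : ∀ n, ‖Tn n‖ ≤ C)
    (n₀ : ℕ) (hreg : RegularSeq T Tn n₀ 0)
    (μ : ℂ) (hμ : ‖μ‖ = 1)
    (f : X →L[ℂ] ℂ) (hf : f ≠ 0) (hfeig : ∀ x : X, f (T x) = μ * f x)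
    (u : X) (hu0 : u ≠ 0) (hTu : T u = u)
    (g : X →L[ℂ] ℂ) (hg0 : g ≠ 0) (hgT : ∀ x : X, g (T x) = g x) :
    ∃ y : X, y ∉ closure (Set.range ⇑(T - μ • 1)) ∧
      ∃ z : X, z ≠ 0 ∧ Tendsto (fun n => Tn n y) atTop (𝓝 z) := by
  have hC0 : 0 ≤ C := le_trans (norm_nonneg _) (hbdd 0)
  have hTb : ∀ (m : ℕ) (v : X), ‖Tn m v‖ ≤ C * ‖v‖ := fun m v =>
    ((Tn m).le_opNorm v).trans (mul_le_mul_of_nonneg_right (hbdd m) (norm_nonneg v))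
  have gpow : ∀ (j : ℕ) (x : X), g ((T ^ j) x) = g x := by
    have := eig_pow (T := T) (f := g) (μ := 1) (by simpa using hgT)
    intro j x
    simpa using this j x
  have fpow := eig_pow hfeig
  -- g x₀ ≠ 0
  have hb : g x₀ ≠ 0 := by
    intro hb
    apply hg0
    have hgg : ⇑g = fun _ : X => (0 : ℂ) := by
      refine Continuous.ext_on hd g.continuous continuous_const ?_
      rintro x ⟨c, n, rfl⟩
      show g (c • (T ^ n) x₀) = 0
      rw [map_smul, gpow, hb, smul_zero]
    ext v
    rw [ContinuousLinearMap.zero_apply]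
    exact congrFun hgg v
  have ha : f x₀ ≠ 0 := by
    intro ha
    apply hf
    have hff : ⇑f = fun _ : X => (0 : ℂ) := by
      refine Continuous.ext_on hd f.continuous continuous_const ?_
      rintro x ⟨c, n, rfl⟩
      show f (c • (T ^ n) x₀) = 0
      rw [map_smul, fpow, ha, mul_zero, smul_zero]
    ext v
    rw [ContinuousLinearMap.zero_apply]
    exact congrFun hff v
  have hTnu : ∀ m, Tn m u = u := fun m => kappa_fixed (hκ m) hTu
  have hbpos : 0 < ‖g x₀‖ := norm_pos_iff.mpr hb
  have hgpos : 0 < ‖g‖ := norm_pos_iff.mpr hg0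
  have hupos : 0 < ‖u‖ := norm_pos_iff.mpr hu0
  set B : ℝ := C * ‖x₀‖ with hB
  have hB0 : 0 ≤ B := mul_nonneg hC0 (norm_nonneg _)
  set v : ℕ → X := fun m => Tn m x₀ with hv
  have hvb : ∀ m, ‖v m‖ ≤ B := fun m => hTb m x₀
  -- main claim : g u ≠ 0
  have hgu : g u ≠ 0 := by
    intro hgu0
    obtain ⟨J, hJ'⟩ := exists_nat_gt ((2 * B + 1) / ‖u‖)
    have hJ : 2 * B + 1 < J * ‖u‖ := by rwa [div_lt_iff₀ hupos] at hJ'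
    set Q : ℝ := ‖g‖ / ‖g x₀‖ with hQ
    have hQpos : 0 < Q := by positivity
    set A : ℝ := (J : ℝ) * 2 ^ J * Q * ‖u‖ + 2 ^ J * Q * B + 2 * J * (C + 2) with hA
    have hA0 : 0 ≤ A := by positivity
    set ε : ℝ := min (‖g x₀‖ / (‖g‖ * 2 ^ J)) (1 / (A + 1)) with hε
    have hεpos : 0 < ε := lt_min (by positivity) (by positivity)
    have hεA : ε * A ≤ 1 := by
      have h1 : ε ≤ 1 / (A + 1) := min_le_right _ _
      have h2 : ε * (A + 1) ≤ 1 := by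
        rw [le_div_iff₀ (by positivity)] at h1
        linarith
      nlinarith
    set δ : ℝ := Q * ε with hδdef
    have hδ0 : 0 ≤ δ := by positivity
    have hδJ : 2 ^ J * δ ≤ 1 := by
      have h1 : ε ≤ ‖g x₀‖ / (‖g‖ * 2 ^ J) := min_le_left _ _
      rw [le_div_iff₀ (by positivity)] at h1
      have e : 2 ^ J * δ = ε * (‖g‖ * 2 ^ J) / ‖g x₀‖ := by
        rw [hδdef, hQ]; ring
      rw [e, div_le_one hbpos]
      exact h1
    have h2J1 : (1 : ℝ) ≤ 2 ^ J := by
      simpa using pow_le_pow_right₀ (by norm_num : (1:ℝ) ≤ 2) (Nat.zero_le J)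
    have hδ1 : δ ≤ 1 := by nlinarith
    -- density approximation of x₀ + u
    obtain ⟨w, hw, hwd⟩ := hd.exists_dist_lt (x₀ + u) hεpos
    obtain ⟨c, n, rfl⟩ := hw
    have h1 : ‖c • (T ^ n) x₀ - (x₀ + u)‖ ≤ ε := by
      rw [norm_sub_rev, ← dist_eq_norm]
      exact hwd.le
    have hc1 : ‖c - 1‖ ≤ δ := by
      have e : g (c • (T ^ n) x₀ - (x₀ + u)) = (c - 1) * g x₀ := by
        rw [map_sub, map_smul, gpow, map_add, hgu0, smul_eq_mul]
        ring
      have h2 : ‖(c - 1) * g x₀‖ ≤ ‖g‖ * ε := by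
        rw [← e]
        exact (g.le_opNorm _).trans (mul_le_mul_of_nonneg_left h1 (norm_nonneg g))
      rw [norm_mul] at h2
      rw [hδdef, hQ, div_mul_eq_mul_div, le_div_iff₀ hbpos]
      calc ‖c - 1‖ * ‖g x₀‖ ≤ ‖g‖ * ε := h2
        _ = ‖g‖ * ε := rfl
    have hcb : ‖c‖ ≤ 2 := by
      calc ‖c‖ = ‖(c - 1) + 1‖ := by ring_nf
      _ ≤ ‖c - 1‖ + ‖(1 : ℂ)‖ := norm_add_le _ _
      _ ≤ δ + 1 := by rw [norm_one]; exact add_le_add hc1 le_rfl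
      _ ≤ 2 := by linarith
    have hcp : ∀ i : ℕ, ‖c ^ i - 1‖ ≤ (2 ^ i - 1) * δ := by
      intro i
      induction i with
      | zero => simp
      | succ i ih =>
        have e : c ^ (i + 1) - 1 = c * (c ^ i - 1) + (c - 1) := by ring
        calc ‖c ^ (i + 1) - 1‖ = ‖c * (c ^ i - 1) + (c - 1)‖ := by rw [e]
          _ ≤ ‖c * (c ^ i - 1)‖ + ‖c - 1‖ := norm_add_le _ _
          _ = ‖c‖ * ‖c ^ i - 1‖ + ‖c - 1‖ := by rw [norm_mul]
          _ ≤ 2 * ((2 ^ i - 1) * δ) + δ := by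
              refine add_le_add ?_ hc1
              refine mul_le_mul hcb ih (norm_nonneg _) (by norm_num)
          _ ≤ (2 ^ (i + 1) - 1) * δ := by
              rw [pow_succ]
              nlinarith
    have hcle : ∀ i : ℕ, i ≤ J → ‖c ^ i‖ ≤ 2 := by
      intro i hi
      have h2 : (2 : ℝ) ^ i ≤ 2 ^ J := pow_le_pow_right₀ (by norm_num) hi
      calc ‖c ^ i‖ = ‖(c ^ i - 1) + 1‖ := by ring_nf
        _ ≤ ‖c ^ i - 1‖ + ‖(1 : ℂ)‖ := norm_add_le _ _
        _ ≤ (2 ^ i - 1) * δ + 1 := by rw [norm_one]; exact add_le_add (hcp i) le_rfl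
        _ ≤ 2 ^ J * δ + 1 := by nlinarith
        _ ≤ 2 := by linarith
    -- step inequality
    have hTnm : ∀ m, ‖c • (T ^ n) (v m) - (v m + u)‖ ≤ C * ε := by
      intro m
      have he : Tn m (c • (T ^ n) x₀ - (x₀ + u)) = c • (T ^ n) (v m) - (v m + u) := by
        rw [map_sub, map_smul, map_add, hTnu, ← kappa_pow_comm_apply (hκ m) n x₀]
      rw [← he]
      exact (hTb m _).trans (mul_le_mul_of_nonneg_left h1 hC0)
    obtain ⟨N, hN⟩ := ev_norm_le (iter_reg hreg n x₀) hεpos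
    set η : ℝ := (C + 2) * ε with hη
    have hη0 : 0 ≤ η := by positivity
    have hstep : ∀ m ≥ N, ‖c • v (m + n * n₀) - v m - u‖ ≤ η := by
      intro m hm
      have e : c • v (m + n * n₀) - v m - u =
          c • (v (m + n * n₀) - (T ^ n) (v m)) + (c • (T ^ n) (v m) - (v m + u)) := by
        rw [smul_sub]
        abel
      rw [e]
      calc ‖c • (v (m + n * n₀) - (T ^ n) (v m)) + (c • (T ^ n) (v m) - (v m + u))‖
          ≤ ‖c • (v (m + n * n₀) - (T ^ n) (v m))‖ + ‖c • (T ^ n) (v m) - (v m + u)‖ :=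
            norm_add_le _ _
        _ ≤ ‖c‖ * ε + C * ε := by
            refine add_le_add ?_ (hTnm m)
            rw [norm_smul]
            refine mul_le_mul_of_nonneg_left ?_ (norm_nonneg c)
            rw [norm_sub_rev]
            exact hN m hm
        _ ≤ η := by rw [hη]; nlinarith [hcb, hεpos.le, norm_nonneg c]
    -- telescoping
    have htel : ∀ j : ℕ, j ≤ J → ∀ m ≥ N,
        ‖c ^ j • v (m + j * (n * n₀)) - v m - (∑ i ∈ Finset.range j, c ^ i) • u‖
          ≤ (j : ℝ) * (2 * η) := by
      intro j
      induction j with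
      | zero =>
        intro _ m _
        simp
      | succ j ih =>
        intro hj1 m hm
        have hj : j ≤ J := le_trans (Nat.le_succ j) hj1
        have hidx : m + (j + 1) * (n * n₀) = (m + j * (n * n₀)) + n * n₀ := by ring
        have e : c ^ (j + 1) • v (m + (j + 1) * (n * n₀)) - v m
              - (∑ i ∈ Finset.range (j + 1), c ^ i) • u =
            c ^ j • (c • v ((m + j * (n * n₀)) + n * n₀) - v (m + j * (n * n₀)) - u)
              + (c ^ j • v (m + j * (n * n₀)) - v m - (∑ i ∈ Finset.range j, c ^ i) • u) := by
          rw [hidx, Finset.sum_range_succ, add_smul, smul_sub, smul_sub, smul_smul, ← pow_succ]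
          abel
        rw [e]
        have hb1 : ‖c ^ j • (c • v ((m + j * (n * n₀)) + n * n₀) - v (m + j * (n * n₀)) - u)‖
            ≤ 2 * η := by
          rw [norm_smul]
          have hs := hstep (m + j * (n * n₀)) (le_trans hm (Nat.le_add_right _ _))
          exact mul_le_mul (hcle j hj) hs (norm_nonneg _) (by norm_num)
        have hb2 := ih hj m hm
        calc ‖c ^ j • (c • v ((m + j * (n * n₀)) + n * n₀) - v (m + j * (n * n₀)) - u)
              + (c ^ j • v (m + j * (n * n₀)) - v m - (∑ i ∈ Finset.range j, c ^ i) • u)‖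
            ≤ ‖c ^ j • (c • v ((m + j * (n * n₀)) + n * n₀) - v (m + j * (n * n₀)) - u)‖
              + ‖c ^ j • v (m + j * (n * n₀)) - v m - (∑ i ∈ Finset.range j, c ^ i) • u‖ :=
              norm_add_le _ _
          _ ≤ 2 * η + (j : ℝ) * (2 * η) := add_le_add hb1 hb2
          _ ≤ ((j + 1 : ℕ) : ℝ) * (2 * η) := by push_cast; nlinarith
    have hfin := htel J (le_refl J) N (le_refl N)
    set S : ℂ := ∑ i ∈ Finset.range J, c ^ i with hS
    -- |S - J| small
    have hSJ : ‖S - (J : ℂ)‖ ≤ (J : ℝ) * (2 ^ J * δ) := by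
      have e : S - (J : ℂ) = ∑ i ∈ Finset.range J, (c ^ i - 1) := by
        rw [Finset.sum_sub_distrib, Finset.sum_const, Finset.card_range]
        simp [hS]
      rw [e]
      calc ‖∑ i ∈ Finset.range J, (c ^ i - 1)‖ ≤ ∑ i ∈ Finset.range J, ‖c ^ i - 1‖ :=
            norm_sum_le _ _
        _ ≤ ∑ i ∈ Finset.range J, (2 ^ J * δ) := by
            refine Finset.sum_le_sum ?_
            intro i hi
            have hiJ : i ≤ J := le_of_lt (Finset.mem_range.mp hi)
            have h2 : (2 : ℝ) ^ i ≤ 2 ^ J := pow_le_pow_right₀ (by norm_num) hiJ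
            calc ‖c ^ i - 1‖ ≤ (2 ^ i - 1) * δ := hcp i
              _ ≤ 2 ^ J * δ := by nlinarith
        _ = (J : ℝ) * (2 ^ J * δ) := by
            rw [Finset.sum_const, Finset.card_range, nsmul_eq_mul]
    -- bound ‖S • u‖ from above
    have hcJ : ‖c ^ J‖ ≤ 1 + 2 ^ J * δ := by
      calc ‖c ^ J‖ = ‖(c ^ J - 1) + 1‖ := by ring_nf
        _ ≤ ‖c ^ J - 1‖ + ‖(1 : ℂ)‖ := norm_add_le _ _
        _ ≤ (2 ^ J - 1) * δ + 1 := by rw [norm_one]; exact add_le_add (hcp J) le_rfl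
        _ ≤ 1 + 2 ^ J * δ := by nlinarith
    have hSu_ub : ‖S • u‖ ≤ (1 + 2 ^ J * δ) * B + B + (J : ℝ) * (2 * η) := by
      have e : S • u = c ^ J • v (N + J * (n * n₀)) - v N
          - (c ^ J • v (N + J * (n * n₀)) - v N - S • u) := by abel
      rw [e]
      calc ‖c ^ J • v (N + J * (n * n₀)) - v N
            - (c ^ J • v (N + J * (n * n₀)) - v N - S • u)‖
          ≤ ‖c ^ J • v (N + J * (n * n₀)) - v N‖
            + ‖c ^ J • v (N + J * (n * n₀)) - v N - S • u‖ := norm_sub_le _ _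
        _ ≤ (‖c ^ J • v (N + J * (n * n₀))‖ + ‖v N‖) + (J : ℝ) * (2 * η) := by
            refine add_le_add (norm_sub_le _ _) hfin
        _ ≤ ((1 + 2 ^ J * δ) * B + B) + (J : ℝ) * (2 * η) := by
            refine add_le_add (add_le_add ?_ (hvb N)) le_rfl
            rw [norm_smul]
            refine mul_le_mul hcJ (hvb _) (norm_nonneg _) (by positivity)
    -- bound ‖S • u‖ from below
    have hSu_lb : (J : ℝ) * ‖u‖ - (J : ℝ) * (2 ^ J * δ) * ‖u‖ ≤ ‖S • u‖ := by
      have h2 : ‖(J : ℂ) • u‖ = (J : ℝ) * ‖u‖ := by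
        rw [norm_smul]
        congr 1
        simp
      have h3 : ‖S • u - (J : ℂ) • u‖ ≤ (J : ℝ) * (2 ^ J * δ) * ‖u‖ := by
        rw [← sub_smul, norm_smul]
        exact mul_le_mul_of_nonneg_right hSJ (norm_nonneg u)
      have h4 : ‖(J : ℂ) • u‖ ≤ ‖S • u‖ + ‖S • u - (J : ℂ) • u‖ := by
        have e : (J : ℂ) • u = S • u - (S • u - (J : ℂ) • u) := by abel
        have e' := congrArg norm e
        rw [e']
        exact norm_sub_le _ _
      linarith
    -- final contradiction
    have hfinal : (J : ℝ) * ‖u‖ ≤ 2 * B + ε * A := by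
      have hδA : (J : ℝ) * (2 ^ J * δ) * ‖u‖ + 2 ^ J * δ * B + (J : ℝ) * (2 * η) = ε * A := by
        rw [hδdef, hη, hA]
        ring
      have e2 : (1 + 2 ^ J * δ) * B + B + (J : ℝ) * (2 * η)
          = 2 * B + (2 ^ J * δ * B + (J : ℝ) * (2 * η)) := by ring
      nlinarith [hSu_ub, hSu_lb, hδA, e2]
    linarith [hεA, hJ, hfinal]
  -- transfer to f
  have hstar : ∀ x : X, ‖f x‖ * ‖g x₀‖ = ‖g x‖ * ‖f x₀‖ := by
    have hee : (fun x : X => ‖f x‖ * ‖g x₀‖) = (fun x : X => ‖g x‖ * ‖f x₀‖) := by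
      refine Continuous.ext_on hd ((f.continuous.norm).mul continuous_const)
        ((g.continuous.norm).mul continuous_const) ?_
      rintro x ⟨c, n, rfl⟩
      show ‖f (c • (T ^ n) x₀)‖ * ‖g x₀‖ = ‖g (c • (T ^ n) x₀)‖ * ‖f x₀‖
      rw [map_smul, map_smul, gpow, fpow, smul_eq_mul, smul_eq_mul, norm_mul, norm_mul,
        norm_mul, norm_pow, hμ, one_pow]
      ring
    intro x
    exact congrFun hee x
  have hfu : f u ≠ 0 := by
    intro hfu0
    have := hstar u
    rw [hfu0, norm_zero, zero_mul] at this
    have h1 : ‖g u‖ * ‖f x₀‖ ≠ 0 := by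
      refine mul_ne_zero ?_ ?_
      · exact ne_of_gt (norm_pos_iff.mpr hgu)
      · exact ne_of_gt (norm_pos_iff.mpr ha)
    exact h1 this.symm
  -- conclusion
  have hcl : closure (Set.range ⇑(T - μ • 1)) ⊆ {w : X | f w = 0} := by
    refine closure_minimal ?_ ?_
    · rintro _ ⟨x, rfl⟩
      show f ((T - μ • 1) x) = 0
      rw [ContinuousLinearMap.sub_apply, map_sub, hfeig, ContinuousLinearMap.smul_apply,
        ContinuousLinearMap.one_apply, map_smul, smul_eq_mul]
      ring
    · have : {w : X | f w = 0} = ⇑f ⁻¹' {0} := rfl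
      rw [this]
      exact IsClosed.preimage f.continuous isClosed_singleton
  refine ⟨u, fun hmem => hfu (hcl hmem), u, hu0, ?_⟩
  refine tendsto_const_nhds.congr (fun m => ?_)
  exact (hTnu m).symm

end Aux

/-- Let T be supercyclic, {T_n} ⊆ κ(T) bounded and (n₀,0)-regular, and let μ with
|μ| = 1 be an eigenvalue of T*. Then the following are equivalent:
(a) T_n y converges to a nonzero limit for some y ∉ closure(range(T−μI));
(b) X₀ ≠ X and X_c = X;
(c) 1 is an eigenvalue of T and of T*. -/
theorem stmt9 {X : Type*} [NormedAddCommGroup X] [NormedSpace ℂ X] [CompleteSpace X]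
    (T : X →L[ℂ] X) (hsc : Supercyclic T)
    (Tn : ℕ → X →L[ℂ] X) (hκ : ∀ n, InKappa T (Tn n))
    (C : ℝ) (hbdd : ∀ n, ‖Tn n‖ ≤ C)
    (n₀ : ℕ) (hreg : RegularSeq T Tn n₀ 0)
    (μ : ℂ) (hμ : ‖μ‖ = 1)
    (f : X →L[ℂ] ℂ) (hf : f ≠ 0) (hfeig : ∀ x : X, f (T x) = μ * f x) :
    ((∃ y : X, y ∉ closure (Set.range ⇑(T - μ • 1)) ∧
        ∃ z : X, z ≠ 0 ∧ Tendsto (fun n => Tn n y) atTop (𝓝 z))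
      ↔ ({x : X | Tendsto (fun n => ‖Tn n x‖) atTop (𝓝 0)} ≠ Set.univ ∧
          {x : X | ∃ z : X, Tendsto (fun n => Tn n x) atTop (𝓝 z)} = Set.univ)) ∧
    (({x : X | Tendsto (fun n => ‖Tn n x‖) atTop (𝓝 0)} ≠ Set.univ ∧
        {x : X | ∃ z : X, Tendsto (fun n => Tn n x) atTop (𝓝 z)} = Set.univ)
      ↔ ((∃ x : X, x ≠ 0 ∧ T x = x) ∧
          ∃ g : X →L[ℂ] ℂ, g ≠ 0 ∧ ∀ x : X, g (T x) = g x)) := by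
  obtain ⟨x₀, hd⟩ := hsc
  constructor
  · constructor
    · rintro ⟨y, -, z, hz, hyz⟩
      exact lemA T x₀ hd Tn hκ C hbdd n₀ hreg y z hz hyz
    · intro hb
      obtain ⟨⟨w, hw0, hTw⟩, g, hg0, hgT⟩ := lemB T Tn hκ C hbdd n₀ hreg hb.1 hb.2
      exact lemC T x₀ hd Tn hκ C hbdd n₀ hreg μ hμ f hf hfeig w hw0 hTw g hg0 hgT
  · constructor
    · intro hb
      exact lemB T Tn hκ C hbdd n₀ hreg hb.1 hb.2
    · rintro ⟨⟨w, hw0, hTw⟩, g, hg0, hgT⟩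
      obtain ⟨y, -, z, hz, hyz⟩ :=
        lemC T x₀ hd Tn hκ C hbdd n₀ hreg μ hμ f hf hfeig w hw0 hTw g hg0 hgT
      exact lemA T x₀ hd Tn hκ C hbdd n₀ hreg y z hz hyz
end

section
/- Let u : (1,∞) → (0,∞) be a decreasing function and T ∈ B(X) such that for every λ ∈ ℂ with |λ| > 1 the operator T − λI is invertible and ‖(T − λI)^{−1}‖ ≤ u(|λ|)/(|λ| − 1). If σ(T) ∩ 𝕋 has one-dimensional Hausdorff measure zero, then ‖T^n‖ / (n · u(n/(n−1))) → 0 as n → ∞. -/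
open Filter Topology MeasureTheory

section AuxNevanlinna

private lemma chord_lower {a b : ℝ} (h : |a - b| ≤ 1) :
    |a - b| ≤ 2 * ‖Complex.exp (a * Complex.I) - Complex.exp (b * Complex.I)‖ := by
  have key : |Real.sin (a - b)| ≤ ‖Complex.exp (a * Complex.I) - Complex.exp (b * Complex.I)‖ := by
    have hfac : Complex.exp (a * Complex.I) - Complex.exp (b * Complex.I)
        = Complex.exp (b * Complex.I) * (Complex.exp (((a - b : ℝ) : ℂ) * Complex.I) - 1) := by
      rw [mul_sub, mul_one, ← Complex.exp_add]
      push_cast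
      ring_nf
    have h1 : ‖Complex.exp ((b : ℂ) * Complex.I)‖ = 1 := by
      simpa using Complex.norm_exp_ofReal_mul_I b
    have him : |(Complex.exp (((a - b : ℝ) : ℂ) * Complex.I) - 1).im|
        ≤ ‖Complex.exp (((a - b : ℝ) : ℂ) * Complex.I) - 1‖ := Complex.abs_im_le_norm _
    rw [Complex.sub_im, Complex.exp_ofReal_mul_I_im, Complex.one_im, sub_zero] at him
    rw [hfac, norm_mul, h1, one_mul]
    exact him
  have hsin_abs : |Real.sin (a - b)| = Real.sin |a - b| := by
    rcases le_or_gt 0 (a - b) with hc | hc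
    · rw [abs_of_nonneg hc]
      exact abs_of_nonneg (Real.sin_nonneg_of_nonneg_of_le_pi hc
        (by nlinarith [Real.pi_gt_three, abs_of_nonneg hc]))
    · have hge : 0 ≤ Real.sin (-(a - b)) := Real.sin_nonneg_of_nonneg_of_le_pi (by linarith)
        (by nlinarith [Real.pi_gt_three, abs_of_neg hc])
      rw [Real.sin_neg] at hge
      rw [abs_of_neg hc, Real.sin_neg, abs_of_nonpos (by linarith)]
  have hsin : |a - b| ≤ 2 * |Real.sin (a - b)| := by
    rcases eq_or_ne (a - b) 0 with h0 | h0
    · simp [h0]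
    · have habs : 0 < |a - b| := abs_pos.2 h0
      have hcube := Real.sin_gt_sub_cube habs
      rw [hsin_abs]
      have hx3 : |a - b| ^ 3 ≤ |a - b| := pow_le_of_le_one (abs_nonneg _) h (by norm_num)
      linarith
  linarith [mul_le_mul_of_nonneg_left key (by norm_num : (0:ℝ) ≤ 2)]

private lemma null_angles {N : Set ℂ}
    (hN : (MeasureTheory.Measure.hausdorffMeasure 1 : Measure ℂ) N = 0) :
    volume {θ : ℝ | Complex.exp (-(θ : ℂ) * Complex.I) ∈ N} = 0 := by
  set g : ℝ → ℂ := fun θ => Complex.exp (-(θ : ℂ) * Complex.I) with hg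
  set S : Set ℝ := {θ : ℝ | g θ ∈ N} with hS
  have hchord : ∀ a b : ℝ, |a - b| ≤ 1 → |a - b| ≤ 2 * ‖g a - g b‖ := by
    intro a b hab
    have := chord_lower (a := -a) (b := -b) (by rwa [neg_sub_neg, abs_sub_comm])
    rw [neg_sub_neg, abs_sub_comm] at this
    simpa [hg] using this
  have hcover : S ⊆ ⋃ n : ℤ, S ∩ Set.Icc (n : ℝ) (n + 1) := by
    intro x hx
    exact Set.mem_iUnion.2 ⟨⌊x⌋, hx, Int.floor_le x, (Int.lt_floor_add_one x).le⟩
  refine measure_mono_null hcover (measure_iUnion_null fun n => ?_)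
  set I : Set ℝ := Set.Icc (n : ℝ) (n + 1) with hI
  have hlen : ∀ x ∈ I, ∀ y ∈ I, |x - y| ≤ 1 := by
    rintro x ⟨hx1, hx2⟩ y ⟨hy1, hy2⟩
    rw [abs_sub_le_iff]; constructor <;> linarith
  have hinj : Set.InjOn g I := by
    intro x hx y hy hxy
    have h2 := hchord x y (hlen x hx y hy)
    rw [hxy] at h2
    simp only [sub_self, norm_zero, mul_zero] at h2
    have hxy0 : |x - y| = 0 := le_antisymm h2 (abs_nonneg _)
    have := abs_eq_zero.1 hxy0
    linarith [sub_eq_zero.1 this]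
  set h : ℂ → ℝ := Function.invFunOn g I with hh
  have hlip : LipschitzOnWith 2 h (g '' (S ∩ I)) := by
    apply LipschitzOnWith.of_dist_le_mul
    rintro x ⟨p, ⟨_, hpI⟩, rfl⟩ y ⟨q, ⟨_, hqI⟩, rfl⟩
    have hxmem : h (g p) ∈ I := Function.invFunOn_mem ⟨p, hpI, rfl⟩
    have hxeq : g (h (g p)) = g p := Function.invFunOn_eq ⟨p, hpI, rfl⟩
    have hymem : h (g q) ∈ I := Function.invFunOn_mem ⟨q, hqI, rfl⟩
    have hyeq : g (h (g q)) = g q := Function.invFunOn_eq ⟨q, hqI, rfl⟩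
    have := hchord (h (g p)) (h (g q)) (hlen _ hxmem _ hymem)
    rw [hxeq, hyeq] at this
    rw [Real.dist_eq, dist_eq_norm]
    simpa using this
  have himg : h '' (g '' (S ∩ I)) = S ∩ I :=
    hinj.invFunOn_image Set.inter_subset_right
  have hmeas : (MeasureTheory.Measure.hausdorffMeasure 1 : Measure ℝ) (S ∩ I) = 0 := by
    have h1 := hlip.hausdorffMeasure_image_le (d := 1) (by norm_num)
    rw [himg] at h1
    have h2 : (MeasureTheory.Measure.hausdorffMeasure 1 : Measure ℂ) (g '' (S ∩ I)) = 0 := by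
      refine measure_mono_null ?_ hN
      rintro x ⟨p, ⟨hp, _⟩, rfl⟩
      exact hp
    rw [h2] at h1
    simpa using h1
  exact MeasureTheory.hausdorffMeasure_real ▸ hmeas

private lemma aux_norm_smul_le {X : Type*} [NormedAddCommGroup X] [NormedSpace ℂ X]
    (c : ℂ) (v : X →L[ℂ] X) : ‖c • v‖ ≤ ‖c‖ * ‖v‖ := norm_smul_le c v

end AuxNevanlinna

set_option maxHeartbeats 8000000 in
/-- Extended Nevanlinna theorem: if u : (1,∞) → (0,∞) is decreasing, T − λI is
invertible with ‖(T − λI)⁻¹‖ ≤ u(|λ|)/(|λ| − 1) for all |λ| > 1, and σ(T) ∩ 𝕋 has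
one-dimensional Hausdorff measure zero, then ‖T^n‖ = o(n · u(n/(n−1))). -/
theorem stmt13 {X : Type*} [NormedAddCommGroup X] [NormedSpace ℂ X] [CompleteSpace X]
    (T : X →L[ℂ] X)
    (u : ℝ → ℝ)
    (hu_pos : ∀ x : ℝ, 1 < x → 0 < u x)
    (hu_dec : AntitoneOn u (Set.Ioi (1 : ℝ)))
    (hres : ∀ lam : ℂ, 1 < ‖lam‖ →
      ∃ S : X →L[ℂ] X,
        (T - lam • (1 : X →L[ℂ] X)) ∘L S = 1 ∧
        S ∘L (T - lam • (1 : X →L[ℂ] X)) = 1 ∧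
        ‖S‖ ≤ u ‖lam‖ / (‖lam‖ - 1))
    (hspec : (MeasureTheory.Measure.hausdorffMeasure 1 : Measure ℂ)
      (spectrum ℂ T ∩ Metric.sphere (0 : ℂ) 1) = 0) :
    Tendsto (fun n : ℕ => ‖T ^ n‖ / ((n : ℝ) * u ((n : ℝ) / ((n : ℝ) - 1))))
      atTop (𝓝 0) := by
  -- Step 1: invertibility of 1 - z • T for ‖z‖ < 1, with norm bound on the inverse.
  have hunit0 : ∀ z : ℂ, z ≠ 0 → ‖z‖ < 1 →
      ∃ W : (X →L[ℂ] X)ˣ, (W : X →L[ℂ] X) = 1 - z • T ∧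
        ‖((W⁻¹ : (X →L[ℂ] X)ˣ) : X →L[ℂ] X)‖ ≤ ‖z‖⁻¹ * (u ‖z‖⁻¹ / (‖z‖⁻¹ - 1)) := by
    intro z hz hz1
    have hz0 : 0 < ‖z‖ := norm_pos_iff.2 hz
    have hlam : 1 < ‖z⁻¹‖ := by
      rw [norm_inv]
      exact one_lt_inv_iff₀.2 ⟨hz0, hz1⟩
    obtain ⟨S, h1, h2, h3⟩ := hres z⁻¹ hlam
    have hzl : z * z⁻¹ = 1 := mul_inv_cancel₀ hz
    have e1 : (1 : X →L[ℂ] X) - z • T = (-z) • (T - z⁻¹ • (1 : X →L[ℂ] X)) := by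
      rw [smul_sub, smul_smul, neg_mul, hzl, neg_smul, neg_smul, one_smul, sub_neg_eq_add]
      abel
    refine ⟨⟨1 - z • T, (-z⁻¹) • S, ?_, ?_⟩, rfl, ?_⟩
    · rw [e1, smul_mul_smul_comm, neg_mul_neg, hzl, one_smul]
      exact h1
    · rw [e1, smul_mul_smul_comm, neg_mul_neg, inv_mul_cancel₀ hz, one_smul]
      exact h2
    · show ‖(-z⁻¹) • S‖ ≤ _
      refine le_trans (norm_smul_le (-z⁻¹) S) ?_
      rw [norm_neg, norm_inv]
      have := mul_le_mul_of_nonneg_left h3 (inv_nonneg.2 hz0.le)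
      rw [norm_inv] at this
      exact this
  have hIsUnit : ∀ z : ℂ, ‖z‖ < 1 → IsUnit ((1 : X →L[ℂ] X) - z • T) := by
    intro z hz1
    rcases eq_or_ne z 0 with rfl | hz
    · simp
    · obtain ⟨W, hW, -⟩ := hunit0 z hz hz1
      exact ⟨W, hW⟩
  have hResBound : ∀ z : ℂ, z ≠ 0 → ‖z‖ < 1 →
      ‖Ring.inverse ((1 : X →L[ℂ] X) - z • T)‖ ≤ ‖z‖⁻¹ * (u ‖z‖⁻¹ / (‖z‖⁻¹ - 1)) := by
    intro z hz hz1
    obtain ⟨W, hW, hb⟩ := hunit0 z hz hz1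
    have : Ring.inverse ((W : X →L[ℂ] X)) = ((W⁻¹ : (X →L[ℂ] X)ˣ) : X →L[ℂ] X) :=
      Ring.inverse_unit W
    rw [hW] at this
    rw [this]
    exact hb
  have hsmul_unit : ∀ (c : ℂ), c ≠ 0 → ∀ {x : X →L[ℂ] X}, IsUnit x → IsUnit (c • x) := by
    intro c hc x hx
    rw [Algebra.smul_def]
    exact (IsUnit.map (algebraMap ℂ (X →L[ℂ] X)) (isUnit_iff_ne_zero.2 hc)).mul hx
  -- Step 2: the bad angle set is null
  have hΘspec : ∀ θ : ℝ, ¬ IsUnit ((1 : X →L[ℂ] X) - Complex.exp (θ * Complex.I) • T) →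
      Complex.exp (-(θ : ℂ) * Complex.I) ∈ spectrum ℂ T ∩ Metric.sphere (0 : ℂ) 1 := by
    intro θ hn
    constructor
    · by_contra hσ
      apply hn
      have hu : IsUnit (algebraMap ℂ (X →L[ℂ] X) (Complex.exp (-(θ : ℂ) * Complex.I)) - T) :=
        spectrum.notMem_iff.1 hσ
      have heq : (1 : X →L[ℂ] X) - Complex.exp (θ * Complex.I) • T =
          Complex.exp (θ * Complex.I) •
            (algebraMap ℂ (X →L[ℂ] X) (Complex.exp (-(θ : ℂ) * Complex.I)) - T) := by
        rw [Algebra.algebraMap_eq_smul_one, smul_sub, smul_smul, ← Complex.exp_add]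
        norm_num
      rw [heq]
      exact hsmul_unit _ (Complex.exp_ne_zero _) hu
    · simp only [Metric.mem_sphere, dist_zero_right]
      have := Complex.norm_exp_ofReal_mul_I (-θ)
      rw [show ((-θ : ℝ) : ℂ) = -(θ : ℂ) by push_cast; ring] at this
      exact this
  have hvol : volume {θ : ℝ | ¬ IsUnit ((1 : X →L[ℂ] X) - Complex.exp (θ * Complex.I) • T)}
      = 0 := by
    refine measure_mono_null ?_ (null_angles hspec)
    intro θ hθ
    exact hΘspec θ hθ
  -- Step 3: main argument
  rw [Metric.tendsto_nhds]
  intro ε hε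
  obtain ⟨U, hUsub, hUopen, hUvol⟩ :=
    Set.exists_isOpen_lt_of_lt _ (ENNReal.ofReal (ε/8))
      (by rw [hvol]; exact ENNReal.ofReal_pos.2 (by linarith))
  set Gset : Set ℝ := Set.Icc 0 (2*Real.pi) \ U with hGset
  have hGc : IsCompact Gset := isCompact_Icc.diff hUopen
  set K : Set ℂ := (fun p : ℝ × ℝ => (p.1 : ℂ) * Complex.exp (p.2 * Complex.I)) ''
    (Set.Icc (1/2 : ℝ) 1 ×ˢ Gset) with hK
  have hKc : IsCompact K := (isCompact_Icc.prod hGc).image (by fun_prop)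
  have hKunit : ∀ w ∈ K, IsUnit ((1 : X →L[ℂ] X) - w • T) := by
    rintro w ⟨⟨a, θ⟩, ⟨⟨ha1, ha2⟩, hθ⟩, rfl⟩
    rcases lt_or_eq_of_le ha2 with hlt | hone
    · apply hIsUnit
      rw [norm_mul]
      have h1 : ‖((a : ℝ) : ℂ)‖ = a := by
        rw [Complex.norm_real, Real.norm_eq_abs, abs_of_nonneg (by linarith)]
      have h2 : ‖Complex.exp ((θ : ℂ) * Complex.I)‖ = 1 := by
        simpa using Complex.norm_exp_ofReal_mul_I θ
      rw [h1, h2, mul_one]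
      exact hlt
    · subst hone
      by_contra hn
      have hθU : θ ∈ U := hUsub (by simpa using hn)
      exact hθ.2 hθU
  have hcont : ContinuousOn (fun w : ℂ => Ring.inverse ((1 : X →L[ℂ] X) - w • T)) K := by
    intro w hw
    have h1 : ContinuousAt (fun w : ℂ => (1 : X →L[ℂ] X) - w • T) w := by fun_prop
    have h2 : ContinuousAt (Ring.inverse : (X →L[ℂ] X) → (X →L[ℂ] X))
        ((1 : X →L[ℂ] X) - w • T) := by
      have := NormedRing.inverse_continuousAt (hKunit w hw).unit
      rwa [IsUnit.unit_spec] at this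
    exact (ContinuousAt.comp (f := fun w : ℂ => (1 : X →L[ℂ] X) - w • T) h2 h1).continuousWithinAt
  obtain ⟨M, hM⟩ : ∃ M, ∀ w ∈ K, ‖Ring.inverse ((1 : X →L[ℂ] X) - w • T)‖ ≤ M := by
    rcases K.eq_empty_or_nonempty with hKe | hKne
    · exact ⟨0, by simp [hKe]⟩
    · obtain ⟨w0, hw0, hmax⟩ := hKc.exists_isMaxOn hKne hcont.norm
      exact ⟨‖Ring.inverse ((1 : X →L[ℂ] X) - w0 • T)‖, fun w hw => hmax hw⟩
  set M₀ : ℝ := max M 0 with hM₀def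
  have hM₀nn : 0 ≤ M₀ := le_max_right _ _
  have hM₀ : ∀ w ∈ K, ‖Ring.inverse ((1 : X →L[ℂ] X) - w • T)‖ ≤ M₀ :=
    fun w hw => le_trans (hM w hw) (le_max_left _ _)
  have hu2 : 0 < u 2 := hu_pos 2 one_lt_two
  have hev1 : ∀ᶠ n : ℕ in atTop, 8 * M₀ / ((n : ℝ) * u 2) < ε/2 := by
    have ht : Tendsto (fun n : ℕ => (8 * M₀ / u 2) / (n : ℝ)) atTop (𝓝 0) :=
      tendsto_const_div_atTop_nhds_zero_nat _
    refine (ht.eventually_lt_const (by linarith : (0:ℝ) < ε/2)).mono fun n hn => ?_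
    rwa [div_div, mul_comm (u 2)] at hn
  filter_upwards [hev1, eventually_ge_atTop 2] with n hn1 hn2
  -- basic facts about this fixed n
  have hm2 : (2:ℝ) ≤ (n : ℝ) := by exact_mod_cast hn2
  set m : ℝ := (n : ℝ) with hmdef
  have hm0 : (0:ℝ) < m := by linarith
  have hm1' : (0:ℝ) < m - 1 := by linarith
  set r : ℝ := m / (m - 1) with hrdef
  set s : ℝ := (m - 1) / m with hsdef
  have hs0 : 0 < s := div_pos hm1' hm0
  have hs1 : s < 1 := by rw [hsdef, div_lt_one hm0]; linarith
  have hshalf : 1/2 ≤ s := by rw [hsdef, le_div_iff₀ hm0]; linarith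
  have hsr : s⁻¹ = r := by rw [hsdef, hrdef, inv_div]
  have hr1 : 1 < r := by rw [hrdef, lt_div_iff₀ hm1']; linarith
  have hr0 : (0:ℝ) < r := by linarith
  have hr2 : r ≤ 2 := by rw [hrdef, div_le_iff₀ hm1']; linarith
  have hur : 0 < u r := hu_pos r hr1
  have hu2r : u 2 ≤ u r := hu_dec (Set.mem_Ioi.2 hr1) (Set.mem_Ioi.2 one_lt_two) hr2
  have hD0 : 0 < m * u r := mul_pos hm0 hur
  -- differentiability on the closed ball of radius s
  have hdiff : DifferentiableOn ℂ (fun z : ℂ => Ring.inverse ((1 : X →L[ℂ] X) - z • T))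
      (Metric.closedBall (0:ℂ) s) := by
    intro z hz
    rw [Metric.mem_closedBall, dist_zero_right] at hz
    have hz1 : ‖z‖ < 1 := lt_of_le_of_lt hz hs1
    have hun := hIsUnit z hz1
    have h1 : DifferentiableAt ℂ (fun w : ℂ => (1 : X →L[ℂ] X) - w • T) z :=
      (differentiableAt_const _).sub (differentiableAt_id.smul_const T)
    have h2 : DifferentiableAt ℂ (Ring.inverse : (X →L[ℂ] X) → (X →L[ℂ] X))
        ((1 : X →L[ℂ] X) - z • T) := by
      have := (analyticAt_inverse (𝕜 := ℂ) hun.unit).differentiableAt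
      rwa [IsUnit.unit_spec] at this
    exact (DifferentiableAt.comp (f := fun w : ℂ => (1 : X →L[ℂ] X) - w • T)
      z h2 h1).differentiableWithinAt
  -- Cauchy power series representation on the ball of radius s
  rw [← Real.coe_toNNReal s hs0.le] at hdiff
  have hcps := hdiff.hasFPowerSeriesOnBall (Real.toNNReal_pos.2 hs0)
  rw [Real.coe_toNNReal s hs0.le] at hcps
  have hgeo := spectrum.hasFPowerSeriesOnBall_inverse_one_sub_smul ℂ T
  have heq := hgeo.hasFPowerSeriesAt.eq_formalMultilinearSeries hcps.hasFPowerSeriesAt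
  have h1 := congrFun heq n
  have h2 := congrArg
    (fun q : ContinuousMultilinearMap ℂ (fun _ : Fin n => ℂ) (X →L[ℂ] X) =>
      q (fun _ => (1:ℂ))) h1
  simp only [ContinuousMultilinearMap.mkPiRing_apply, cauchyPowerSeries_apply,
    Finset.prod_const, one_pow, one_smul] at h2
  -- h2 : T ^ n = (2 * pi * I)⁻¹ • circle integral
  -- the integrand as a function of the angle
  set F : ℝ → (X →L[ℂ] X) := fun θ =>
    deriv (circleMap 0 s) θ • ((1 / (circleMap 0 s θ - 0)) ^ n •
      (circleMap 0 s θ - 0)⁻¹ •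
        Ring.inverse ((1 : X →L[ℂ] X) - circleMap 0 s θ • T)) with hF
  set g : ℝ → ℝ :=
    fun θ => r ^ n * (M₀ + (m * u r) * Set.indicator U (fun _ => 1) θ) with hgdef
  have huIoc : Set.uIoc (0:ℝ) (2*Real.pi) = Set.Ioc 0 (2*Real.pi) :=
    Set.uIoc_of_le (by positivity)
  have hind : IntervalIntegrable (fun θ => Set.indicator U (fun _ => (1:ℝ)) θ)
      volume 0 (2*Real.pi) := by
    rw [intervalIntegrable_iff]
    refine MeasureTheory.Integrable.indicator ?_ hUopen.measurableSet
    rw [huIoc]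
    exact MeasureTheory.integrableOn_const measure_Ioc_lt_top.ne
  have hgint : IntervalIntegrable g volume 0 (2*Real.pi) :=
    ((intervalIntegrable_const).add (hind.const_mul _)).const_mul _
  -- pointwise norm bound on the integrand
  have hfz_bad : ∀ θ : ℝ,
      ‖Ring.inverse ((1 : X →L[ℂ] X) - circleMap 0 s θ • T)‖ ≤ m * u r := by
    intro θ
    have hz0 : circleMap 0 s θ ≠ 0 := circleMap_ne_center hs0.ne'
    have hzn : ‖circleMap 0 s θ‖ = s := by
      rw [norm_circleMap_zero, abs_of_pos hs0]
    have hb := hResBound (circleMap 0 s θ) hz0 (by rw [hzn]; exact hs1)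
    rw [hzn, hsr] at hb
    refine le_trans hb (le_of_eq ?_)
    have hr1' : r - 1 = 1/(m-1) := by
      rw [hrdef, div_sub_one hm1'.ne']
      congr 1
      ring
    rw [hr1', hrdef]
    field_simp
  have hae : ∀ᵐ θ ∂volume.restrict (Set.uIoc (0:ℝ) (2*Real.pi)), ‖F θ‖ ≤ g θ := by
    rw [MeasureTheory.ae_restrict_iff' measurableSet_uIoc]
    refine Filter.Eventually.of_forall fun θ hθ => ?_
    rw [huIoc] at hθ
    have hz0 : circleMap 0 s θ ≠ 0 := circleMap_ne_center hs0.ne'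
    have hzn : ‖circleMap 0 s θ‖ = s := by
      rw [norm_circleMap_zero, abs_of_pos hs0]
    have hd : ‖deriv (circleMap 0 s) θ‖ = s := by
      rw [deriv_circleMap]
      rw [norm_mul]
      have : ‖circleMap 0 s θ‖ = s := hzn
      rw [this]
      simp
    have hnorm1 : ‖F θ‖ ≤ s * (s⁻¹ ^ n * (s⁻¹ *
        ‖Ring.inverse ((1 : X →L[ℂ] X) - circleMap 0 s θ • T)‖)) := by
      simp only [hF]
      refine le_trans (aux_norm_smul_le _ _) ?_
      rw [hd]
      refine mul_le_mul_of_nonneg_left ?_ hs0.le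
      refine le_trans (aux_norm_smul_le _ _) ?_
      have hp : ‖(1 / (circleMap 0 s θ - 0)) ^ n‖ = s⁻¹ ^ n := by
        rw [norm_pow, sub_zero, norm_div, norm_one, hzn, one_div]
      rw [hp]
      refine mul_le_mul_of_nonneg_left ?_ (by positivity)
      refine le_trans (aux_norm_smul_le _ _) ?_
      rw [sub_zero, norm_inv, hzn]
    have hnorm2 : ‖F θ‖ ≤ r ^ n * ‖Ring.inverse ((1 : X →L[ℂ] X) - circleMap 0 s θ • T)‖ := by
      refine le_trans hnorm1 (le_of_eq ?_)
      have hq : s * (s⁻¹ ^ n * (s⁻¹ *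
          ‖Ring.inverse ((1 : X →L[ℂ] X) - circleMap 0 s θ • T)‖))
          = s⁻¹ ^ n * ‖Ring.inverse ((1 : X →L[ℂ] X) - circleMap 0 s θ • T)‖ * (s * s⁻¹) := by
        ring
      rw [hq, mul_inv_cancel₀ hs0.ne', mul_one, hsr]
    by_cases hθU : θ ∈ U
    · have hiθ : Set.indicator U (fun _ => (1:ℝ)) θ = 1 := Set.indicator_of_mem hθU _
      have hb := hfz_bad θ
      refine le_trans hnorm2 ?_
      rw [hgdef]
      simp only [hiθ, mul_one]
      refine mul_le_mul_of_nonneg_left ?_ (by positivity)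
      linarith
    · have hθG : θ ∈ Gset := ⟨⟨hθ.1.le, hθ.2⟩, hθU⟩
      have hzK : circleMap 0 s θ ∈ K := ⟨(s, θ), ⟨⟨hshalf, hs1.le⟩, hθG⟩, by simp [circleMap]⟩
      have hb := hM₀ _ hzK
      have hiθ : Set.indicator U (fun _ => (1:ℝ)) θ = 0 := Set.indicator_of_notMem hθU _
      refine le_trans hnorm2 ?_
      rw [hgdef]
      simp only [hiθ, mul_zero, add_zero]
      exact mul_le_mul_of_nonneg_left hb (by positivity)
  -- integral bounds
  have hInn : 0 ≤ ∫ θ in (0:ℝ)..(2*Real.pi), g θ := by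
    refine intervalIntegral.integral_nonneg (by positivity) fun θ _ => ?_
    have hiθ : (0:ℝ) ≤ Set.indicator U (fun _ => (1:ℝ)) θ :=
      Set.indicator_nonneg (fun _ _ => zero_le_one) θ
    have : (0:ℝ) ≤ M₀ + m * u r * Set.indicator U (fun _ => (1:ℝ)) θ := by positivity
    positivity
  have hIind : (∫ θ in (0:ℝ)..(2*Real.pi), Set.indicator U (fun _ => (1:ℝ)) θ) ≤ ε/8 := by
    rw [intervalIntegral.integral_of_le (by positivity)]
    rw [MeasureTheory.integral_indicator_const (1:ℝ) hUopen.measurableSet]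
    rw [measureReal_restrict_apply hUopen.measurableSet]
    rw [smul_eq_mul, mul_one]
    have h1 : volume (U ∩ Set.Ioc 0 (2*Real.pi)) < ENNReal.ofReal (ε/8) :=
      lt_of_le_of_lt (measure_mono Set.inter_subset_left) hUvol
    exact ENNReal.toReal_le_of_le_ofReal (by positivity) h1.le
  have hIg : (∫ θ in (0:ℝ)..(2*Real.pi), g θ)
      ≤ r ^ n * (M₀ * (2*Real.pi) + (m * u r) * (ε/8)) := by
    rw [hgdef]
    rw [intervalIntegral.integral_const_mul]
    refine mul_le_mul_of_nonneg_left ?_ (by positivity)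
    rw [intervalIntegral.integral_add intervalIntegrable_const (hind.const_mul _)]
    rw [intervalIntegral.integral_const, intervalIntegral.integral_const_mul]
    rw [smul_eq_mul, sub_zero]
    have := mul_le_mul_of_nonneg_left hIind hD0.le
    nlinarith [this]
  -- bound r^n ≤ 8
  have hrn8 : r ^ n ≤ 8 := by
    have hrm1 : r - 1 = 1/(m-1) := by rw [hrdef, div_sub_one hm1'.ne']; congr 1; ring
    have hlog : Real.log r ≤ 1/(m-1) := by
      have h3 := Real.log_le_sub_one_of_pos hr0
      linarith
    have hexp : r ^ n = Real.exp (m * Real.log r) := by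
      rw [hmdef, Real.exp_nat_mul, Real.exp_log hr0]
    rw [hexp]
    have hlg0 : 0 ≤ Real.log r := Real.log_nonneg hr1.le
    have h4 : m * Real.log r ≤ 2 := by
      have h5 : m * Real.log r ≤ m * (1/(m-1)) := mul_le_mul_of_nonneg_left hlog hm0.le
      have h6 : m * (1/(m-1)) ≤ 2 := by
        rw [mul_one_div, div_le_iff₀ hm1']; linarith
      linarith
    have h7 : Real.exp 2 = Real.exp 1 * Real.exp 1 := by
      rw [← Real.exp_add]; norm_num
    have h8 := Real.exp_one_lt_d9
    nlinarith [Real.exp_le_exp.2 h4, Real.exp_pos 1]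
  -- assemble everything
  have hc : ‖((2 * (Real.pi:ℂ) * Complex.I))⁻¹‖ = (2*Real.pi)⁻¹ := by
    rw [norm_inv]
    congr 1
    simp [abs_of_pos Real.pi_pos]
  have hTnle : ‖T ^ n‖ ≤ (2*Real.pi)⁻¹ * (r ^ n * (M₀ * (2*Real.pi) + (m * u r) * (ε/8))) := by
    have hJle : ‖∫ θ in (0:ℝ)..(2*Real.pi), F θ‖ ≤ |∫ θ in (0:ℝ)..(2*Real.pi), g θ| :=
      intervalIntegral.norm_integral_le_abs_of_norm_le hae hgint
    have habs : |∫ θ in (0:ℝ)..(2*Real.pi), g θ| = ∫ θ in (0:ℝ)..(2*Real.pi), g θ :=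
      abs_of_nonneg hInn
    calc ‖T ^ n‖
        ≤ ‖((2 * (Real.pi:ℂ) * Complex.I))⁻¹‖ *
          ‖∮ z in C(0, s), (1 / (z - 0)) ^ n • (z - 0)⁻¹ •
            Ring.inverse ((1 : X →L[ℂ] X) - z • T)‖ := by
          rw [h2]; exact aux_norm_smul_le _ _
      _ = (2*Real.pi)⁻¹ * ‖∫ θ in (0:ℝ)..(2*Real.pi), F θ‖ := by rw [hc]; rfl
      _ ≤ (2*Real.pi)⁻¹ * (∫ θ in (0:ℝ)..(2*Real.pi), g θ) := by
          rw [← habs]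
          exact mul_le_mul_of_nonneg_left hJle (by positivity)
      _ ≤ (2*Real.pi)⁻¹ * (r ^ n * (M₀ * (2*Real.pi) + (m * u r) * (ε/8))) :=
          mul_le_mul_of_nonneg_left hIg (by positivity)
  -- final numeric assembly
  rw [dist_zero_right, Real.norm_eq_abs,
    abs_of_nonneg (div_nonneg (norm_nonneg _) hD0.le)]
  have hstep : ‖T ^ n‖ / (m * u r)
      ≤ ((2*Real.pi)⁻¹ * (r ^ n * (M₀ * (2*Real.pi) + (m * u r) * (ε/8)))) / (m * u r) := by
    exact div_le_div_of_nonneg_right hTnle hD0.le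
  refine lt_of_le_of_lt hstep ?_
  have hπ3 := Real.pi_gt_three
  have hexpand : ((2*Real.pi)⁻¹ * (r ^ n * (M₀ * (2*Real.pi) + (m * u r) * (ε/8)))) / (m * u r)
      = r ^ n * M₀ / (m * u r) + r ^ n * ε / (16*Real.pi) := by
    field_simp
    ring
  rw [hexpand]
  have e1 : r ^ n * M₀ / (m * u r) ≤ 8 * M₀ / (m * u r) :=
    div_le_div_of_nonneg_right (mul_le_mul_of_nonneg_right hrn8 hM₀nn) hD0.le
  have e2 : 8 * M₀ / (m * u r) ≤ 8 * M₀ / (m * u 2) := by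
    apply div_le_div_of_nonneg_left (by positivity) (by positivity)
    exact mul_le_mul_of_nonneg_left hu2r hm0.le
  have e3 : r ^ n * ε / (16*Real.pi) ≤ 8 * ε / (16*Real.pi) :=
    div_le_div_of_nonneg_right (mul_le_mul_of_nonneg_right hrn8 hε.le) (by positivity)
  have e4 : 8 * ε / (16*Real.pi) ≤ ε/2 := by
    rw [div_le_div_iff₀ (by positivity) (by norm_num)]
    nlinarith
  linarith [hn1, e1, e2, e3, e4]
end
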